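/- arXiv:math/0104137 — 4 statements merged into one kernel-verified Lean document; each statement's English description precedes it below -/
import Mathlib

section
/- For every integer k ≥ 2 and every n ≥ 0, B_k(n) = Σ_{j=0}^∞ (B_{k−1}(j)/j!)·jⁿ, where B_1(j) = 1 for all j (so that for k = 2 this reads B_2(n) = Σ_{j≥0} jⁿ/j!). -/
open scoped Nat

/-- The `k`-times iterated exponential function: `expIter 0 = id`,
`expIter (k+1) x = exp (expIter k x)`. -/
noncomputable def expIter : ℕ → ℝ → ℝ
  | 0 => id
  | k + 1 => fun x => Real.exp (expIter k x)

/-- `BellB k n` is the `n`-th derivative of the `k`-times iterated exponential at `0`,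
so that `expIter k x = ∑ n, BellB k n * x ^ n / n !`. -/
noncomputable def BellB (k n : ℕ) : ℝ := iteratedDeriv n (expIter k) 0

/-- The Bell numbers of order `k`: `bellOrd k n = BellB k n / expIter k 0`. -/
noncomputable def bellOrd (k n : ℕ) : ℝ := BellB k n / expIter k 0

/-- Taylor coefficients of a function given by an everywhere-convergent power series
with nonnegative coefficients. -/
lemma iteratedDeriv_of_hasSum (a : ℕ → ℝ) (ha : ∀ n, 0 ≤ a n) (f : ℝ → ℝ)
    (h : ∀ x : ℝ, HasSum (fun n => a n * x ^ n) (f x)) (n : ℕ) :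
    iteratedDeriv n f 0 = n ! * a n := by
  set p : FormalMultilinearSeries ℝ ℝ ℝ :=
    fun m => a m • ContinuousMultilinearMap.mkPiAlgebraFin ℝ m ℝ with hpdef
  have hp : ∀ (m : ℕ) (x : ℝ), (p m) (fun _ => x) = a m * x ^ m := by
    intro m x
    simp [hpdef, ContinuousMultilinearMap.mkPiAlgebraFin_apply, List.prod_ofFn]
  have hnorm : ∀ m, ‖p m‖ = a m := by
    intro m
    rw [hpdef]
    rw [norm_smul (a m) (ContinuousMultilinearMap.mkPiAlgebraFin ℝ m ℝ)]
    rw [ContinuousMultilinearMap.norm_mkPiAlgebraFin, mul_one, Real.norm_eq_abs,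
      abs_of_nonneg (ha m)]
  have hps : HasFPowerSeriesOnBall f p 0 ⊤ := by
    refine ⟨le_top.trans_eq ?_, ENNReal.zero_lt_top, ?_⟩
    · symm
      refine ENNReal.eq_top_of_forall_nnreal_le (fun r => p.le_radius_of_summable ?_)
      refine (h r).summable.congr fun m => ?_
      rw [hnorm]
    · intro y _
      simpa [hp] using h y
  have key := (hps.factorial_smul (y := (1:ℝ)) n)
  rw [hp, nsmul_eq_mul, one_pow, mul_one] at key
  rw [iteratedDeriv_eq_iteratedFDeriv, ← key]

/-- Fubini step: rearranging `∑_j c_j e^{jx}` as a power series in `x`. -/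
lemma hasSum_step (c : ℕ → ℝ) (hc : ∀ j, 0 ≤ c j) (f : ℝ → ℝ)
    (h : ∀ x : ℝ, HasSum (fun j => c j * x ^ j) (f x)) (x : ℝ) :
    HasSum (fun n => (∑' j : ℕ, c j * (j : ℝ) ^ n) * (x ^ n / n !)) (f (Real.exp x)) := by
  set F : ℝ → ℕ × ℕ → ℝ := fun t q => c q.1 * (q.1 : ℝ) ^ q.2 * (t ^ q.2 / q.2 !) with hF
  have hrow : ∀ (t : ℝ) (j : ℕ), HasSum (fun m => F t (j, m)) (c j * Real.exp ((j : ℝ) * t)) := by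
    intro t j
    have h0 := NormedSpace.expSeries_div_hasSum_exp ((j : ℝ) * t)
    rw [← Real.exp_eq_exp_ℝ] at h0
    have h1 := h0.mul_left (c j)
    have h2 : (fun m => c j * (((j : ℝ) * t) ^ m / m !)) = fun m => F t (j, m) := by
      funext m
      rw [hF]
      simp only [mul_pow]
      ring
    exact h2 ▸ h1
  have hcol : ∀ t : ℝ, HasSum (fun j => c j * Real.exp ((j : ℝ) * t)) (f (Real.exp t)) := by
    intro t
    have h2 : (fun j => c j * Real.exp t ^ j) = fun j => c j * Real.exp ((j : ℝ) * t) := by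
      funext j
      rw [Real.exp_nat_mul]
    exact h2 ▸ h (Real.exp t)
  have habs : ∀ (t : ℝ) q, |F t q| = F |t| q := by
    intro t q
    rw [hF]
    simp only [abs_mul, abs_div, abs_pow, Nat.abs_cast, abs_of_nonneg (hc q.1)]
  have hFsummable : ∀ t : ℝ, Summable (F t) := by
    intro t
    have h3 : Summable (F |t|) := by
      refine (summable_prod_of_nonneg ?_).2 ⟨fun j => (hrow _ j).summable, ?_⟩
      · intro q
        rw [← habs]
        exact abs_nonneg _
      · exact (hcol |t|).summable.congr fun j => ((hrow |t| j).tsum_eq).symm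
    rw [← summable_abs_iff]
    exact h3.congr fun q => (habs t q).symm
  have hdouble : ∀ t : ℝ, HasSum (F t) (f (Real.exp t)) := by
    intro t
    have h4 := (hFsummable t).hasSum
    have h5 := h4.prod_fiberwise (fun j => hrow t j)
    rw [(h5.unique (hcol t))] at h4
    exact h4
  have hAn : ∀ m : ℕ, Summable (fun j => c j * (j : ℝ) ^ m) := by
    intro m
    have h6 := (hFsummable 1).comp_injective
      (i := fun j => ((j, m) : ℕ × ℕ)) (fun a b hab => (Prod.mk.injEq _ _ _ _ ▸ hab).1)
    have h7 := h6.mul_right ((m ! : ℝ))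
    refine h7.congr fun j => ?_
    show c j * (j:ℝ) ^ m * ((1:ℝ) ^ m / m !) * m ! = _
    have : (m ! : ℝ) ≠ 0 := Nat.cast_ne_zero.mpr m.factorial_ne_zero
    field_simp
    rw [one_pow, mul_one]
  have hswap : HasSum (fun q : ℕ × ℕ => F x (q.2, q.1)) (f (Real.exp x)) :=
    ((Equiv.prodComm ℕ ℕ).hasSum_iff).2 (hdouble x)
  have hrow2 : ∀ m : ℕ, HasSum (fun j => F x (j, m))
      ((∑' j : ℕ, c j * (j : ℝ) ^ m) * (x ^ m / m !)) := fun m =>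
    (hAn m).hasSum.mul_right (x ^ m / m !)
  exact hswap.prod_fiberwise fun m => hrow2 m

lemma expIter_comm (k : ℕ) (x : ℝ) : expIter (k + 1) x = expIter k (Real.exp x) := by
  induction k with
  | zero => simp [expIter]
  | succ k ih =>
    rw [show expIter (k + 1 + 1) x = Real.exp (expIter (k + 1) x) from rfl, ih]
    rfl

/-- The iterated exponential is given by its Taylor series everywhere, and its Taylor
coefficients are nonnegative. -/
lemma bellB_hasSum : ∀ k : ℕ,
    (∀ x : ℝ, HasSum (fun n => BellB (k + 1) n * (x ^ n / n !)) (expIter (k + 1) x)) ∧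
    (∀ n, 0 ≤ BellB (k + 1) n) := by
  intro k
  induction k with
  | zero =>
    have hexp : ∀ x : ℝ, HasSum (fun n => (1 / n ! : ℝ) * x ^ n) (expIter 1 x) := by
      intro x
      have h0 := NormedSpace.expSeries_div_hasSum_exp x
      rw [← Real.exp_eq_exp_ℝ] at h0
      have h2 : (fun n => x ^ n / n ! : ℕ → ℝ) = fun n => (1 / n ! : ℝ) * x ^ n := by
        funext n; ring
      have h3 : Real.exp x = expIter 1 x := by simp [expIter]
      exact h3 ▸ h2 ▸ h0
    have hBell1 : ∀ n, BellB 1 n = 1 := by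
      intro n
      have := iteratedDeriv_of_hasSum (fun n => (1 / n ! : ℝ))
        (fun n => by positivity) (expIter 1) hexp n
      rw [BellB, this]
      have : (n ! : ℝ) ≠ 0 := Nat.cast_ne_zero.mpr n.factorial_ne_zero
      field_simp
    refine ⟨fun x => ?_, fun n => by rw [hBell1]; norm_num⟩
    have h2 : (fun n => (1 / n ! : ℝ) * x ^ n) = fun n => BellB 1 n * (x ^ n / n !) := by
      funext n; rw [hBell1]; ring
    exact h2 ▸ hexp x
  | succ k ih =>
    obtain ⟨hs, hn⟩ := ih
    set c : ℕ → ℝ := fun j => BellB (k + 1) j / j ! with hcdef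
    have hc : ∀ j, 0 ≤ c j := fun j => div_nonneg (hn j) (Nat.cast_nonneg _)
    have h : ∀ x : ℝ, HasSum (fun j => c j * x ^ j) (expIter (k + 1) x) := by
      intro x
      have h2 : (fun j => BellB (k + 1) j * (x ^ j / j !)) = fun j => c j * x ^ j := by
        funext j; rw [hcdef]; ring
      exact h2 ▸ hs x
    have hstep := hasSum_step c hc (expIter (k + 1)) h
    have hg : (fun x => expIter (k + 1) (Real.exp x)) = expIter (k + 2) := by
      funext x; rw [← expIter_comm]
    have hA : ∀ n, 0 ≤ ∑' j : ℕ, c j * (j : ℝ) ^ n := by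
      intro n
      exact tsum_nonneg fun j => mul_nonneg (hc j) (by positivity)
    have hBd : ∀ n, BellB (k + 2) n = ∑' j : ℕ, c j * (j : ℝ) ^ n := by
      intro n
      have h2 : ∀ x : ℝ, HasSum
          (fun m => ((∑' j : ℕ, c j * (j : ℝ) ^ m) / m !) * x ^ m) (expIter (k + 2) x) := by
        intro x
        have h3 : (fun m => (∑' j : ℕ, c j * (j : ℝ) ^ m) * (x ^ m / m !)) =
            fun m => ((∑' j : ℕ, c j * (j : ℝ) ^ m) / m !) * x ^ m := by
          funext m; ring
        exact h3 ▸ hg ▸ hstep x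
      have h4 := iteratedDeriv_of_hasSum (fun m => (∑' j : ℕ, c j * (j : ℝ) ^ m) / m !)
        (fun m => div_nonneg (hA m) (Nat.cast_nonneg _)) (expIter (k + 2)) h2 n
      rw [BellB, h4]
      have : (n ! : ℝ) ≠ 0 := Nat.cast_ne_zero.mpr n.factorial_ne_zero
      field_simp
    refine ⟨fun x => ?_, fun n => by rw [hBd]; exact hA n⟩
    have h5 : (fun m => (∑' j : ℕ, c j * (j : ℝ) ^ m) * (x ^ m / m !)) =
        fun m => BellB (k + 2) m * (x ^ m / m !) := by
      funext m; rw [hBd]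
    exact h5 ▸ hg ▸ hstep x

/-- Dobinski-type formula: for `k ≥ 2` and every `n`,
`BellB k n = ∑' j, (BellB (k-1) j / j !) * j ^ n`. -/
theorem BellB_eq_tsum (k : ℕ) (hk : 2 ≤ k) (n : ℕ) :
    BellB k n = ∑' j : ℕ, BellB (k - 1) j / (j ! : ℝ) * (j : ℝ) ^ n := by
  obtain ⟨m, rfl⟩ : ∃ m, k = m + 2 := ⟨k - 2, by omega⟩
  obtain ⟨hs, hn⟩ := bellB_hasSum m
  set c : ℕ → ℝ := fun j => BellB (m + 1) j / j ! with hcdef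
  have hc : ∀ j, 0 ≤ c j := fun j => div_nonneg (hn j) (Nat.cast_nonneg _)
  have h : ∀ x : ℝ, HasSum (fun j => c j * x ^ j) (expIter (m + 1) x) := by
    intro x
    have h2 : (fun j => BellB (m + 1) j * (x ^ j / j !)) = fun j => c j * x ^ j := by
      funext j; rw [hcdef]; ring
    exact h2 ▸ hs x
  have hstep := hasSum_step c hc (expIter (m + 1)) h
  have hg : (fun x => expIter (m + 1) (Real.exp x)) = expIter (m + 2) := by
    funext x; rw [← expIter_comm]
  have hA : ∀ i, 0 ≤ ∑' j : ℕ, c j * (j : ℝ) ^ i :=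
    fun i => tsum_nonneg fun j => mul_nonneg (hc j) (by positivity)
  have h2 : ∀ x : ℝ, HasSum
      (fun i => ((∑' j : ℕ, c j * (j : ℝ) ^ i) / i !) * x ^ i) (expIter (m + 2) x) := by
    intro x
    have h3 : (fun i => (∑' j : ℕ, c j * (j : ℝ) ^ i) * (x ^ i / i !)) =
        fun i => ((∑' j : ℕ, c j * (j : ℝ) ^ i) / i !) * x ^ i := by
      funext i; ring
    exact h3 ▸ hg ▸ hstep x
  have h4 := iteratedDeriv_of_hasSum (fun i => (∑' j : ℕ, c j * (j : ℝ) ^ i) / i !)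
    (fun i => div_nonneg (hA i) (Nat.cast_nonneg _)) (expIter (m + 2)) h2 n
  have hsub : m + 2 - 1 = m + 1 := by omega
  rw [BellB, h4, hsub]
  have : (n ! : ℝ) ≠ 0 := Nat.cast_ne_zero.mpr n.factorial_ne_zero
  field_simp [hcdef]
  exact tsum_congr fun j => by rw [hcdef]; ring
end

section
/- For every integer k ≥ 2 and every n ≥ 0, B_k(n+1) = Σ_{j_1 + ⋯ + j_k = n} (n!/(j_1!⋯j_k!))·B_1(j_1)·B_2(j_2)⋯B_k(j_k), where the sum is over all k-tuples (j_1, …, j_k) of nonnegative integers with j_1 + ⋯ + j_k = n, and B_1(j) = 1 for all j. -/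
open scoped Nat
open Finset
open scoped ContDiff

open scoped Nat


lemma pascal_sum (F G : ℕ → ℝ) (n : ℕ) :
    ∑ i ∈ Finset.range (n+1), (n.choose i : ℝ) * (F (i+1) * G (n-i)) +
    ∑ i ∈ Finset.range (n+1), (n.choose i : ℝ) * (F i * G (n-i+1)) =
    ∑ i ∈ Finset.range (n+2), ((n+1).choose i : ℝ) * (F i * G (n+1-i)) := by
  rw [Finset.sum_range_succ' (fun i => ((n+1).choose i : ℝ) * (F i * G (n+1-i))) (n+1)]
  have h1 : ∑ i ∈ Finset.range (n+1), ((n+1).choose (i+1) : ℝ) * (F (i+1) * G (n+1-(i+1)))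
      = ∑ i ∈ Finset.range (n+1), (n.choose i : ℝ) * (F (i+1) * G (n-i))
      + ∑ i ∈ Finset.range (n+1), (n.choose (i+1) : ℝ) * (F (i+1) * G (n-i)) := by
    rw [← Finset.sum_add_distrib]
    refine Finset.sum_congr rfl fun i hi => ?_
    have : n + 1 - (i + 1) = n - i := by omega
    rw [this, Nat.choose_succ_succ]
    push_cast
    ring
  rw [h1]
  have h2 : ∑ i ∈ Finset.range (n+1), (n.choose i : ℝ) * (F i * G (n-i+1))
      = ∑ i ∈ Finset.range (n+1), (n.choose (i+1) : ℝ) * (F (i+1) * G (n-i))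
      + ((n+1).choose 0 : ℝ) * (F 0 * G (n+1-0)) := by
    rw [Finset.sum_range_succ' (fun i => (n.choose i : ℝ) * (F i * G (n-i+1))) n,
      Finset.sum_range_succ (fun i => (n.choose (i+1) : ℝ) * (F (i+1) * G (n-i))) n]
    simp only [Nat.choose_succ_self, Nat.cast_zero, zero_mul, add_zero, Nat.choose_zero_right,
      Nat.cast_one, Nat.sub_zero, Nat.sub_self]
    congr 1
    refine Finset.sum_congr rfl fun i hi => ?_
    simp only [Finset.mem_range] at hi
    have : n - (i+1) + 1 = n - i := by omega
    rw [this]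
  rw [h2]
  ring

theorem my_iteratedDeriv_mul (f g : ℝ → ℝ) (hf : ContDiff ℝ ∞ f) (hg : ContDiff ℝ ∞ g) (n : ℕ) :
    iteratedDeriv n (fun x => f x * g x) = fun x =>
      ∑ p ∈ Finset.HasAntidiagonal.antidiagonal n,
        (n.choose p.1 : ℝ) * (iteratedDeriv p.1 f x * iteratedDeriv p.2 g x) := by
  induction n with
  | zero => simp
  | succ n ih =>
    have hdf : ∀ m, ContDiff ℝ ∞ (iteratedDeriv m f) := fun m => iteratedDeriv_eq_iterate (f := f) (n := m) ▸ hf.iterate_deriv m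
    have hdg : ∀ m, ContDiff ℝ ∞ (iteratedDeriv m g) := fun m => iteratedDeriv_eq_iterate (f := g) (n := m) ▸ hg.iterate_deriv m
    funext x
    rw [iteratedDeriv_succ, ih]
    rw [deriv_fun_sum (fun p _ => by
      exact (((hdf p.1).differentiable (by simp) x).mul ((hdg p.2).differentiable (by simp) x)).const_mul _)]
    have hterm : ∀ p : ℕ × ℕ,
        deriv (fun x => (n.choose p.1 : ℝ) * (iteratedDeriv p.1 f x * iteratedDeriv p.2 g x)) x
        = (n.choose p.1 : ℝ) * (iteratedDeriv (p.1+1) f x * iteratedDeriv p.2 g x)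
          + (n.choose p.1 : ℝ) * (iteratedDeriv p.1 f x * iteratedDeriv (p.2+1) g x) := by
      intro p
      rw [deriv_const_mul (d := fun y => iteratedDeriv p.1 f y * iteratedDeriv p.2 g y) _ (((hdf p.1).differentiable (by simp) x).mul
        ((hdg p.2).differentiable (by simp) x)),
        deriv_fun_mul ((hdf p.1).differentiable (by simp) x) ((hdg p.2).differentiable (by simp) x),
        ← iteratedDeriv_succ, ← iteratedDeriv_succ]
      ring
    simp only [hterm, Finset.sum_add_distrib]
    rw [Finset.Nat.sum_antidiagonal_eq_sum_range_succ_mk, Finset.Nat.sum_antidiagonal_eq_sum_range_succ_mk,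
      Finset.Nat.sum_antidiagonal_eq_sum_range_succ_mk (n := n+1)]
    exact pascal_sum (fun i => iteratedDeriv i f x) (fun i => iteratedDeriv i g x) n


lemma iteratedDeriv_zero_fun' (n : ℕ) : iteratedDeriv n (fun _ : ℝ => (0:ℝ)) = fun _ => 0 := by
  induction n with
  | zero => simp
  | succ n ih => rw [iteratedDeriv_succ', deriv_const', ih]

lemma iteratedDeriv_one' (n : ℕ) :
    iteratedDeriv n (fun _ : ℝ => (1:ℝ)) = fun _ => if n = 0 then (1:ℝ) else 0 := by
  cases n with
  | zero => simp
  | succ n => rw [iteratedDeriv_succ', deriv_const', iteratedDeriv_zero_fun']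
              simp

theorem iteratedDeriv_finset_prod {ι : Type*} [DecidableEq ι] (s : Finset ι) (f : ι → ℝ → ℝ)
    (hf : ∀ i ∈ s, ContDiff ℝ ∞ (f i)) (n : ℕ) (x : ℝ) :
    iteratedDeriv n (fun x => ∏ i ∈ s, f i x) x =
      ∑ p ∈ Finset.piAntidiag s n,
        ((n ! : ℝ) / ∏ i ∈ s, ((p i)! : ℝ)) * ∏ i ∈ s, iteratedDeriv (p i) (f i) x := by
  induction s using Finset.cons_induction generalizing n with
  | empty =>
    simp only [Finset.prod_empty, Finset.piAntidiag_empty]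
    rw [iteratedDeriv_one']
    cases n with
    | zero => simp
    | succ n => simp
  | cons i s hi ih =>
    have hfi : ContDiff ℝ ∞ (f i) := hf i (Finset.mem_cons_self i s)
    have hfs : ∀ t ∈ s, ContDiff ℝ ∞ (f t) := fun t ht => hf t (Finset.mem_cons_of_mem ht)
    have hprod : ContDiff ℝ ∞ (fun x => ∏ t ∈ s, f t x) := contDiff_prod hfs
    have hL : (fun x => ∏ t ∈ Finset.cons i s hi, f t x)
        = fun x => f i x * ∏ t ∈ s, f t x := by
      funext y; rw [Finset.prod_cons]
    rw [hL, my_iteratedDeriv_mul (f i) _ hfi hprod n]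
    simp only [ih hfs]
    rw [Finset.piAntidiag_cons hi n, Finset.sum_disjiUnion]
    refine Finset.sum_congr rfl fun p hp => ?_
    rw [Finset.sum_map]
    simp only [Finset.mul_sum]
    simp only [Finset.HasAntidiagonal.mem_antidiagonal] at hp
    refine Finset.sum_congr rfl fun q hq => ?_
    simp only [Finset.mem_piAntidiag] at hq
    have hqi : q i = 0 := by
      by_contra h
      exact hi (hq.2 i h)
    have hmap : ∀ t, (addRightEmbedding fun t => if t = i then p.1 else 0) q t
        = q t + if t = i then p.1 else 0 := fun t => rfl
    have key1 : ∏ t ∈ Finset.cons i s hi,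
        ((((addRightEmbedding fun t => if t = i then p.1 else 0) q) t)! : ℝ)
        = (p.1)! * ∏ t ∈ s, ((q t)! : ℝ) := by
      rw [Finset.prod_cons]
      simp only [hmap, hqi, if_pos rfl, zero_add]
      congr 1
      refine Finset.prod_congr rfl fun t ht => ?_
      rw [if_neg (fun h : t = i => hi (h ▸ ht)), add_zero]
    have key2 : ∏ t ∈ Finset.cons i s hi,
        iteratedDeriv (((addRightEmbedding fun t => if t = i then p.1 else 0) q) t) (f t) x
        = iteratedDeriv p.1 (f i) x * ∏ t ∈ s, iteratedDeriv (q t) (f t) x := by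
      rw [Finset.prod_cons]
      simp only [hmap, hqi, if_pos rfl, zero_add]
      congr 1
      refine Finset.prod_congr rfl fun t ht => ?_
      rw [if_neg (fun h : t = i => hi (h ▸ ht)), add_zero]
    rw [key1, key2]
    have hchoose : (n.choose p.1 : ℝ) * (p.2)! * (p.1)! = n ! := by
      rw [← hp]
      have h := Nat.choose_mul_factorial_mul_factorial (Nat.le_add_right p.1 p.2)
      simp only [Nat.add_sub_cancel_left] at h
      push_cast [← h]
      ring
    have hP : (∏ t ∈ s, ((q t)! : ℝ)) ≠ 0 :=
      Finset.prod_ne_zero_iff.mpr fun t _ => Nat.cast_ne_zero.mpr (Nat.factorial_ne_zero _)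
    have hpf : ((p.1)! : ℝ) ≠ 0 := Nat.cast_ne_zero.mpr (Nat.factorial_ne_zero _)
    field_simp
    ring_nf
    rw [← hchoose]
    ring

lemma contDiff_expIter (k : ℕ) : ContDiff ℝ ∞ (expIter k) := by
  induction k with
  | zero => exact contDiff_id
  | succ k ih => exact Real.contDiff_exp.comp ih

lemma deriv_expIter (k : ℕ) :
    deriv (expIter k) = fun x => ∏ i : Fin k, expIter ((i : ℕ) + 1) x := by
  induction k with
  | zero => funext x; simp [expIter, deriv_id]
  | succ k ih =>
    funext x
    have h1 : HasDerivAt (expIter k) (deriv (expIter k) x) x :=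
      ((contDiff_expIter k).differentiable (by simp) x).hasDerivAt
    have h2 : HasDerivAt (expIter (k+1)) (Real.exp (expIter k x) * deriv (expIter k) x) x := by
      exact (Real.hasDerivAt_exp (expIter k x)).comp x h1
    rw [h2.deriv, ih]
    rw [Fin.prod_univ_castSucc]
    simp only [Fin.coe_castSucc, Fin.val_last]
    rw [show expIter (k+1) x = Real.exp (expIter k x) from rfl]
    ring

/-- Recursion: for `k ≥ 2` and every `n`,
`BellB k (n+1) = ∑_{j₁+⋯+j_k = n} (n! / (j₁!⋯j_k!)) * B₁(j₁)⋯B_k(j_k)`. -/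
theorem BellB_succ_eq_sum (k : ℕ) (hk : 2 ≤ k) (n : ℕ) :
    BellB k (n + 1) =
      ∑ j ∈ Finset.Nat.antidiagonalTuple k n,
        ((n ! : ℝ) / ∏ i : Fin k, ((j i)! : ℝ)) * ∏ i : Fin k, BellB ((i : ℕ) + 1) (j i) := by
  rw [BellB, iteratedDeriv_succ', deriv_expIter k,
    iteratedDeriv_finset_prod Finset.univ (fun i : Fin k => expIter ((i : ℕ) + 1))
      (fun i _ => contDiff_expIter _) n 0,
    ← Finset.piAntidiag_univ_fin_eq_antidiagonalTuple n k]
  rfl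
end

section
/- The limit lim_{n→∞} (1/(2n))·log( b_2(2n)/b_2(n)² ) = log 2 holds, where b_2(n) are the classical Bell numbers. -/
open scoped Nat

/-- The classical Bell numbers: `bellTwo n = B₂(n) / e`, where `B₂(n)` is the `n`-th
derivative of `exp (exp x)` at `x = 0`; equivalently
`exp (exp x - 1) = ∑ n, bellTwo n * x ^ n / n !`. -/
noncomputable def bellTwo (n : ℕ) : ℝ :=
  iteratedDeriv n (fun x : ℝ => Real.exp (Real.exp x)) 0 / Real.exp 1

open Real Filter

noncomputable def S (n : ℕ) : ℝ := ∑' k : ℕ, (k : ℝ) ^ n / k !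

lemma pow_le_fact_mul_exp (m k : ℕ) : (k : ℝ) ^ m ≤ m ! * Real.exp k := by
  have h := Real.sum_le_exp_of_nonneg (x := (k : ℝ)) (Nat.cast_nonneg k) (m + 1)
  have h2 : (k : ℝ) ^ m / m ! ≤ Real.exp k := by
    refine le_trans ?_ h
    refine Finset.single_le_sum (f := fun i => (k : ℝ) ^ i / i !) ?_ (by simp)
    intro i _
    positivity
  calc (k : ℝ) ^ m = ((k : ℝ) ^ m / m !) * m ! := by field_simp
    _ ≤ Real.exp k * m ! := by
        apply mul_le_mul_of_nonneg_right h2 (by positivity)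
    _ = m ! * Real.exp k := mul_comm _ _

lemma summable_aux (m : ℕ) (c : ℝ) (hc : 0 ≤ c) :
    Summable (fun k : ℕ => (k : ℝ) ^ m * c ^ k / k !) := by
  refine Summable.of_nonneg_of_le (fun k => by positivity)
    (f := fun k : ℕ => (m ! : ℝ) * ((Real.exp 1 * c) ^ k / k !)) ?_
    ((Real.summable_pow_div_factorial _).mul_left _)
  intro k
  simp only [mul_pow, ← Real.exp_nat_mul, mul_one]
  rw [← mul_div_assoc]
  have h1 : (k : ℝ) ^ m * c ^ k ≤ (m ! : ℝ) * (Real.exp k * c ^ k) := by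
    rw [← mul_assoc]
    exact mul_le_mul_of_nonneg_right (pow_le_fact_mul_exp m k) (pow_nonneg hc k)
  exact div_le_div_of_nonneg_right h1 (by positivity)


lemma summable_term (m : ℕ) (x : ℝ) :
    Summable (fun k : ℕ => (k : ℝ) ^ m * Real.exp (k * x) / k !) := by
  have h := summable_aux m (Real.exp x) (Real.exp_nonneg x)
  convert h using 2 with k
  rw [Real.exp_nat_mul]

lemma exp_exp_eq_tsum (x : ℝ) :
    Real.exp (Real.exp x) = ∑' k : ℕ, Real.exp (k * x) / k ! := by
  have h : Real.exp = fun y : ℝ => ∑' n : ℕ, y ^ n / n ! := by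
    rw [Real.exp_eq_exp_ℝ, NormedSpace.exp_eq_tsum_div]
  calc Real.exp (Real.exp x) = ∑' n : ℕ, (Real.exp x) ^ n / n ! := congrFun h (Real.exp x)
    _ = ∑' k : ℕ, Real.exp (k * x) / k ! := tsum_congr fun k => by rw [Real.exp_nat_mul]

lemma dobinski_deriv (n : ℕ) (x : ℝ) :
    iteratedDeriv n (fun x : ℝ => Real.exp (Real.exp x)) x
      = ∑' k : ℕ, (k : ℝ) ^ n * Real.exp (k * x) / k ! := by
  induction n generalizing x with
  | zero => simp [exp_exp_eq_tsum x]
  | succ n ih =>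
    rw [iteratedDeriv_succ]
    have hfun : iteratedDeriv n (fun x : ℝ => Real.exp (Real.exp x))
        = fun y : ℝ => ∑' k : ℕ, (k : ℝ) ^ n * Real.exp (k * y) / k ! := funext fun y => ih y
    rw [hfun]
    have hd : HasDerivAt (fun y : ℝ => ∑' k : ℕ, (k : ℝ) ^ n * Real.exp (k * y) / k !)
        (∑' k : ℕ, (k : ℝ) ^ (n + 1) * Real.exp (k * x) / k !) x := by
      have key := hasDerivAt_tsum_of_isPreconnected
        (u := fun k : ℕ => (k : ℝ) ^ (n + 1) * Real.exp (k * (x + 1)) / k !)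
        (g := fun (k : ℕ) (y : ℝ) => (k : ℝ) ^ n * Real.exp (k * y) / k !)
        (g' := fun (k : ℕ) (y : ℝ) => (k : ℝ) ^ (n + 1) * Real.exp (k * y) / k !) (y := x) (y₀ := x)
        (summable_term (n + 1) (x + 1)) (isOpen_Ioo (a := x - 1) (b := x + 1))
        (isPreconnected_Ioo) ?_ ?_ ?_ (summable_term n x) ?_
      · exact key
      · intro k y _
        have h1 : HasDerivAt (fun y : ℝ => (k : ℝ) * y) (k : ℝ) y := by
          simpa using (hasDerivAt_id y).const_mul (k : ℝ)
        have h2 : HasDerivAt (fun y : ℝ => Real.exp ((k : ℝ) * y))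
            (Real.exp ((k : ℝ) * y) * k) y := (Real.hasDerivAt_exp _).comp y h1
        have h3 := (h2.const_mul ((k : ℝ) ^ n)).div_const (k ! : ℝ)
        refine h3.congr_deriv ?_
        push_cast
        ring
      · intro k y hy
        have hyx : y ≤ x + 1 := le_of_lt hy.2
        have : Real.exp (k * y) ≤ Real.exp (k * (x + 1)) :=
          Real.exp_le_exp.mpr (by nlinarith [Nat.cast_nonneg (α := ℝ) k])
        rw [Real.norm_eq_abs, abs_of_nonneg (by positivity)]
        exact div_le_div_of_nonneg_right
          (mul_le_mul_of_nonneg_left this (by positivity)) (by positivity)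
      · exact ⟨by linarith, by linarith⟩
      · exact ⟨by linarith, by linarith⟩
    exact hd.deriv

lemma summable_S (n : ℕ) : Summable (fun k : ℕ => (k : ℝ) ^ n / k !) := by
  have h := summable_term n 0
  simpa using h

lemma bellTwo_eq (n : ℕ) : bellTwo n = S n / Real.exp 1 := by
  unfold bellTwo S
  rw [dobinski_deriv n 0]
  congr 1
  exact tsum_congr fun k => by simp

lemma S_pos (n : ℕ) : 0 < S n := by
  refine Summable.tsum_pos (summable_S n) (fun k => by positivity) 1 ?_
  simp

lemma S_lower (n k : ℕ) : (k : ℝ) ^ n / k ! ≤ S n :=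
  Summable.le_tsum (summable_S n) k fun j _ => by positivity

lemma S_upper (n : ℕ) {x : ℝ} (hx : 0 < x) :
    S n ≤ n ! * Real.exp (Real.exp x) / x ^ n := by
  have key : S n * (x ^ n / n !) ≤ Real.exp (Real.exp x) := by
    rw [exp_exp_eq_tsum x, S, ← tsum_mul_right]
    refine Summable.tsum_le_tsum (fun k => ?_) ((summable_S n).mul_right _)
      (by simpa using summable_term 0 x)
    have h1 : (k : ℝ) ^ n * x ^ n / n ! ≤ Real.exp (k * x) := by
      have h2 := Real.sum_le_exp_of_nonneg (x := (k : ℝ) * x) (by positivity) (n + 1)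
      refine le_trans ?_ h2
      have := Finset.single_le_sum (f := fun i => ((k : ℝ) * x) ^ i / i !)
        (fun i _ => by positivity) (Finset.self_mem_range_succ n)
      simpa [mul_pow] using this
    calc (k : ℝ) ^ n / k ! * (x ^ n / n !) = ((k : ℝ) ^ n * x ^ n / n !) / k ! := by ring
      _ ≤ Real.exp (k * x) / k ! := by
          exact div_le_div_of_nonneg_right h1 (by positivity)
  calc S n = S n * (x ^ n / n !) * (n ! / x ^ n) := by field_simp
    _ ≤ Real.exp (Real.exp x) * (n ! / x ^ n) := by
        apply mul_le_mul_of_nonneg_right key (by positivity)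
    _ = n ! * Real.exp (Real.exp x) / x ^ n := by ring

lemma pow_div_exp_le_factorial (n : ℕ) : ((n : ℝ) / Real.exp 1) ^ n ≤ n ! := by
  have h : (n : ℝ) ^ n ≤ n ! * Real.exp n := by
    have := pow_le_fact_mul_exp n n
    exact this
  rw [div_pow]
  rw [div_le_iff₀ (by positivity)]
  calc (n : ℝ) ^ n ≤ n ! * Real.exp n := h
    _ = n ! * Real.exp 1 ^ n := by rw [← Real.exp_nat_mul, mul_one]

lemma factorial_le_exp_mul (n : ℕ) (hn : 1 ≤ n) :
    (n ! : ℝ) ≤ Real.exp 1 * n * ((n : ℝ) / Real.exp 1) ^ n := by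
  induction n with
  | zero => omega
  | succ m ih =>
    rcases Nat.eq_or_lt_of_le hn with h1 | h1
    · have hm0 : m = 0 := by omega
      subst hm0
      have he : Real.exp 1 * (1 : ℝ) * ((1 : ℝ) / Real.exp 1) ^ 1 = 1 := by
        field_simp
      norm_num at he ⊢
    · have hm : 1 ≤ m := by omega
      have ihm := ih hm
      have hstep : Real.exp 1 ≤ ((m + 1 : ℝ) / m) ^ (m + 1) := by
        have hx := Real.add_one_le_exp (-(1 / (m + 1 : ℝ)))
        have hmpos : (0 : ℝ) < m := by exact_mod_cast hm
        have h2 : (m : ℝ) / (m + 1) ≤ Real.exp (-(1 / (m + 1 : ℝ))) := by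
          calc (m : ℝ) / (m + 1) = -(1 / (m + 1)) + 1 := by field_simp; ring
            _ ≤ Real.exp (-(1 / (m + 1))) := hx
        have h3 : Real.exp (1 / (m + 1 : ℝ)) ≤ (m + 1 : ℝ) / m := by
          rw [show Real.exp (1 / (m + 1 : ℝ)) = (Real.exp (-(1 / (m + 1 : ℝ))))⁻¹ by
            rw [Real.exp_neg, inv_inv]]
          rw [show (m + 1 : ℝ) / m = ((m : ℝ) / (m + 1))⁻¹ by rw [inv_div]]
          exact inv_anti₀ (by positivity) h2
        calc Real.exp 1 = Real.exp ((m + 1 : ℝ) * (1 / (m + 1))) := by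
              rw [mul_one_div, div_self (by positivity)]
          _ = Real.exp (1 / (m + 1 : ℝ)) ^ (m + 1) := by
              rw [← Real.exp_nat_mul]; push_cast; ring_nf
          _ ≤ ((m + 1 : ℝ) / m) ^ (m + 1) := by
              apply pow_le_pow_left₀ (Real.exp_nonneg _) h3
      have hmpos : (0 : ℝ) < m := by exact_mod_cast hm
      have key : Real.exp 1 * (m : ℝ) ^ (m + 1) ≤ ((m : ℝ) + 1) ^ (m + 1) := by
        calc Real.exp 1 * (m : ℝ) ^ (m + 1)
            ≤ ((m + 1 : ℝ) / m) ^ (m + 1) * (m : ℝ) ^ (m + 1) :=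
              mul_le_mul_of_nonneg_right hstep (by positivity)
          _ = ((m : ℝ) + 1) ^ (m + 1) := by
              rw [div_pow, div_mul_cancel₀]
              positivity
      have hmain : Real.exp 1 * (m : ℝ) * ((m : ℝ) / Real.exp 1) ^ m
          ≤ Real.exp 1 * (((m : ℝ) + 1) / Real.exp 1) ^ (m + 1) := by
        have e1 : Real.exp 1 * (m : ℝ) * ((m : ℝ) / Real.exp 1) ^ m
            = (m : ℝ) ^ (m + 1) * Real.exp 1 / Real.exp 1 ^ m := by
          rw [div_pow, pow_succ]; field_simp
        have e2 : Real.exp 1 * (((m : ℝ) + 1) / Real.exp 1) ^ (m + 1)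
            = ((m : ℝ) + 1) ^ (m + 1) * Real.exp 1 / Real.exp 1 ^ (m + 1) := by
          rw [div_pow]; field_simp
        rw [e1, e2, div_le_div_iff₀ (by positivity) (by positivity), pow_succ]
        calc (m : ℝ) ^ (m + 1) * Real.exp 1 * (Real.exp 1 ^ m * Real.exp 1)
            = (Real.exp 1 * (m : ℝ) ^ (m + 1)) * (Real.exp 1 ^ m * Real.exp 1) := by ring
          _ ≤ ((m : ℝ) + 1) ^ (m + 1) * (Real.exp 1 ^ m * Real.exp 1) :=
              mul_le_mul_of_nonneg_right key (by positivity)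
          _ = ((m : ℝ) + 1) ^ (m + 1) * Real.exp 1 * Real.exp 1 ^ m := by ring
      calc ((m + 1)! : ℝ) = ((m : ℝ) + 1) * m ! := by
            rw [Nat.factorial_succ]; push_cast; ring
        _ ≤ ((m : ℝ) + 1) * (Real.exp 1 * m * ((m : ℝ) / Real.exp 1) ^ m) :=
            mul_le_mul_of_nonneg_left ihm (by positivity)
        _ ≤ ((m : ℝ) + 1) * (Real.exp 1 * (((m : ℝ) + 1) / Real.exp 1) ^ (m + 1)) :=
            mul_le_mul_of_nonneg_left hmain (by positivity)
        _ = Real.exp 1 * ((m + 1 : ℕ) : ℝ) * (((m + 1 : ℕ) : ℝ) / Real.exp 1) ^ (m + 1) := by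
            push_cast; ring

lemma log_factorial_lb (n : ℕ) : (n : ℝ) * (Real.log n - 1) ≤ Real.log n ! := by
  rcases Nat.eq_zero_or_pos n with h | h
  · simp [h]
  have h1 := pow_div_exp_le_factorial n
  have h2 := Real.log_le_log (by positivity) h1
  rw [Real.log_pow, Real.log_div (by positivity) (Real.exp_ne_zero 1), Real.log_exp] at h2
  exact h2

lemma log_factorial_ub (n : ℕ) (hn : 1 ≤ n) :
    Real.log n ! ≤ (n : ℝ) * (Real.log n - 1) + (1 + Real.log n) := by
  have h1 := factorial_le_exp_mul n hn
  have hnp : (0 : ℝ) < n := by exact_mod_cast hn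
  have h2 := Real.log_le_log (by positivity) h1
  rw [Real.log_mul (by positivity) (by positivity), Real.log_mul (Real.exp_ne_zero 1) (by positivity),
    Real.log_pow, Real.log_div (by positivity) (Real.exp_ne_zero 1), Real.log_exp] at h2
  linarith

lemma log_factorial_ub' (n : ℕ) : Real.log n ! ≤ (n : ℝ) * Real.log n := by
  rcases Nat.eq_zero_or_pos n with h | h
  · simp [h]
  have h1 : (n ! : ℝ) ≤ (n : ℝ) ^ n := by exact_mod_cast Nat.factorial_le_pow n
  have h2 := Real.log_le_log (by positivity) h1
  rwa [Real.log_pow] at h2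

noncomputable def kk (n : ℕ) : ℕ := ⌊(n : ℝ) / Real.log n⌋₊
noncomputable def xx (n : ℕ) : ℝ := Real.log n - Real.log (Real.log n)

lemma tendsto_L : Tendsto (fun n : ℕ => Real.log n) atTop atTop :=
  Real.tendsto_log_atTop.comp tendsto_natCast_atTop_atTop

lemma tendsto_LL : Tendsto (fun n : ℕ => Real.log (Real.log n)) atTop atTop :=
  Real.tendsto_log_atTop.comp tendsto_L

lemma tendsto_logdiv : Tendsto (fun x : ℝ => Real.log x / x) atTop (nhds 0) :=
  Real.isLittleO_log_id_atTop.tendsto_div_nhds_zero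

lemma tendsto_C : Tendsto (fun n : ℕ => Real.log n / n) atTop (nhds 0) :=
  tendsto_logdiv.comp tendsto_natCast_atTop_atTop

lemma tendsto_D : Tendsto (fun n : ℕ => Real.log (Real.log n) / Real.log n) atTop (nhds 0) :=
  tendsto_logdiv.comp tendsto_L

lemma tendsto_invL : Tendsto (fun n : ℕ => 1 / Real.log n) atTop (nhds 0) := by
  simpa [Function.comp_def] using tendsto_inv_atTop_zero.comp tendsto_L

lemma tendsto_invn : Tendsto (fun n : ℕ => 1 / (n : ℝ)) atTop (nhds 0) := by
  simpa [Function.comp_def] using tendsto_inv_atTop_zero.comp (tendsto_natCast_atTop_atTop (R := ℝ))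

lemma tendsto_xx : Tendsto xx atTop atTop := by
  have h2 : ∀ᶠ n : ℕ in atTop, Real.log n / 2 ≤ xx n := by
    have := tendsto_D.eventually (eventually_le_nhds (show (0:ℝ) < 1/2 by norm_num))
    filter_upwards [this, tendsto_L.eventually (eventually_ge_atTop 1)] with n h1 hL
    rw [div_le_iff₀ (by linarith)] at h1
    unfold xx
    nlinarith
  exact tendsto_atTop_mono' _ h2 (tendsto_L.atTop_div_const (by norm_num))

lemma exp_xx_eq {n : ℕ} (hn : 2 ≤ n) : Real.exp (xx n) = n / Real.log n := by
  have h1 : (0:ℝ) < Real.log n := Real.log_pos (by exact_mod_cast hn)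
  rw [xx, Real.exp_sub, Real.exp_log (by positivity), Real.exp_log h1]

lemma tendsto_t : Tendsto (fun n : ℕ => (n : ℝ) / Real.log n) atTop atTop := by
  refine (Real.tendsto_exp_atTop.comp tendsto_xx).congr' ?_
  filter_upwards [eventually_ge_atTop 2] with n hn
  exact exp_xx_eq hn

lemma kk_ge_one {n : ℕ} (h : 2 ≤ (n : ℝ) / Real.log n) : 1 ≤ kk n := by
  refine Nat.le_floor ?_
  push_cast
  linarith

lemma E1 : Tendsto (fun n : ℕ => Real.log (kk n) - (Real.log n - Real.log (Real.log n)))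
    atTop (nhds 0) := by
  have hg : Tendsto (fun n : ℕ => Real.log ((n : ℝ) / Real.log n + (-1))
      - Real.log ((n : ℝ) / Real.log n)) atTop (nhds 0) :=
    (Real.tendsto_log_comp_add_sub_log (-1)).comp tendsto_t
  refine tendsto_of_tendsto_of_tendsto_of_le_of_le' hg tendsto_const_nhds ?_ ?_
  · filter_upwards [tendsto_t.eventually (eventually_ge_atTop 2), eventually_ge_atTop 2]
      with n h2 hn
    have hL : (0:ℝ) < Real.log n := Real.log_pos (by exact_mod_cast hn)
    have hlogt : Real.log ((n : ℝ) / Real.log n) = Real.log n - Real.log (Real.log n) :=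
      Real.log_div (by positivity) (ne_of_gt hL)
    rw [← hlogt]
    have hk_gt : (n : ℝ) / Real.log n - 1 < kk n := Nat.sub_one_lt_floor _
    refine sub_le_sub_right ?_ _
    exact Real.log_le_log (by linarith) (by linarith)
  · filter_upwards [tendsto_t.eventually (eventually_ge_atTop 2), eventually_ge_atTop 2]
      with n h2 hn
    have hL : (0:ℝ) < Real.log n := Real.log_pos (by exact_mod_cast hn)
    have hlogt : Real.log ((n : ℝ) / Real.log n) = Real.log n - Real.log (Real.log n) :=
      Real.log_div (by positivity) (ne_of_gt hL)
    rw [← hlogt]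
    have hk1 : 1 ≤ kk n := kk_ge_one h2
    have : (kk n : ℝ) ≤ (n : ℝ) / Real.log n := Nat.floor_le (by linarith)
    have := Real.log_le_log (by exact_mod_cast hk1) this
    linarith

lemma E2 : Tendsto (fun n : ℕ => Real.log (xx n) - Real.log (Real.log n)) atTop (nhds 0) := by
  have base : Tendsto (fun n : ℕ =>
      Real.log (1 - Real.log (Real.log n) / Real.log n)) atTop (nhds 0) := by
    have h1 : Tendsto (fun n : ℕ => 1 - Real.log (Real.log n) / Real.log n) atTop (nhds 1) := by
      simpa using tendsto_const_nhds.sub tendsto_D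
    have := (Real.continuousAt_log one_ne_zero).tendsto.comp h1
    simpa [Function.comp_def] using this
  refine base.congr' ?_
  filter_upwards [tendsto_L.eventually (eventually_gt_atTop 1)] with n hL
  have hL0 : (0:ℝ) < Real.log n := by linarith
  have hLL : Real.log (Real.log n) < Real.log n := by
    have := Real.log_le_sub_one_of_pos hL0
    linarith
  have h1 : 1 - Real.log (Real.log n) / Real.log n
      = (Real.log n - Real.log (Real.log n)) / Real.log n := by field_simp
  rw [h1, Real.log_div (by linarith) (by linarith), xx]

lemma E3 : Tendsto (fun n : ℕ => Real.log (Real.log ((2 * n : ℕ) : ℝ))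
    - Real.log (Real.log n)) atTop (nhds 0) := by
  have base := (Real.tendsto_log_comp_add_sub_log (Real.log 2)).comp tendsto_L
  refine base.congr' ?_
  filter_upwards [eventually_ge_atTop 1] with n hn
  have hn0 : (0:ℝ) < n := by exact_mod_cast hn
  have h1 : ((2 * n : ℕ) : ℝ) = 2 * n := by push_cast; ring
  simp only [Function.comp]
  rw [h1, Real.log_mul two_ne_zero (ne_of_gt hn0), add_comm]

lemma E4 : Tendsto (fun n : ℕ => Real.log n ! / n - (Real.log n - 1)) atTop (nhds 0) := by
  have hub : Tendsto (fun n : ℕ => (1 + Real.log n) / n) atTop (nhds 0) := by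
    have := tendsto_invn.add tendsto_C
    simpa [add_div] using this
  refine tendsto_of_tendsto_of_tendsto_of_le_of_le' tendsto_const_nhds hub ?_ ?_
  · filter_upwards [eventually_ge_atTop 1] with n hn
    have hn0 : (0:ℝ) < n := by exact_mod_cast hn
    have h := log_factorial_lb n
    rw [sub_nonneg, le_div_iff₀ hn0]
    nlinarith
  · filter_upwards [eventually_ge_atTop 1] with n hn
    have hn0 : (0:ℝ) < n := by exact_mod_cast hn
    have h := log_factorial_ub n hn
    have expand : ((1 + Real.log n) / n + (Real.log n - 1)) * n
        = (1 + Real.log n) + (Real.log n - 1) * n := by field_simp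
    rw [sub_le_iff_le_add, div_le_iff₀ hn0, expand]
    nlinarith

lemma G1 : Tendsto (fun n : ℕ => (kk n : ℝ) * Real.log n / n) atTop (nhds 1) := by
  have hlb : Tendsto (fun n : ℕ => 1 - Real.log n / n) atTop (nhds 1) := by
    simpa using tendsto_const_nhds.sub tendsto_C
  refine tendsto_of_tendsto_of_tendsto_of_le_of_le' hlb tendsto_const_nhds ?_ ?_
  · filter_upwards [tendsto_t.eventually (eventually_ge_atTop 2), eventually_ge_atTop 2]
      with n h2 hn
    have hn0 : (0:ℝ) < n := by exact_mod_cast (by omega : 1 ≤ n)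
    have hL : (0:ℝ) < Real.log n := Real.log_pos (by exact_mod_cast hn)
    have hk_gt : (n : ℝ) / Real.log n - 1 < kk n := Nat.sub_one_lt_floor _
    have h' : (n : ℝ) - Real.log n < (kk n : ℝ) * Real.log n := by
      have := mul_lt_mul_of_pos_right hk_gt hL
      rwa [sub_mul, one_mul, div_mul_cancel₀ _ (ne_of_gt hL)] at this
    have heq : 1 - Real.log n / n = ((n : ℝ) - Real.log n) / n := by field_simp
    rw [heq]
    gcongr
  · filter_upwards [tendsto_t.eventually (eventually_ge_atTop 2), eventually_ge_atTop 2]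
      with n h2 hn
    have hn0 : (0:ℝ) < n := by exact_mod_cast (by omega : 1 ≤ n)
    have hL : (0:ℝ) < Real.log n := Real.log_pos (by exact_mod_cast hn)
    have hk_le : (kk n : ℝ) ≤ (n : ℝ) / Real.log n := Nat.floor_le (by positivity)
    rw [div_le_one hn0]
    calc (kk n : ℝ) * Real.log n ≤ ((n : ℝ) / Real.log n) * Real.log n :=
          mul_le_mul_of_nonneg_right hk_le (le_of_lt hL)
      _ = n := by field_simp

lemma G4 : Tendsto (fun n : ℕ => (kk n : ℝ) / n) atTop (nhds 0) := by
  refine tendsto_of_tendsto_of_tendsto_of_le_of_le' tendsto_const_nhds tendsto_invL ?_ ?_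
  · filter_upwards [eventually_ge_atTop 1] with n hn
    positivity
  · filter_upwards [tendsto_t.eventually (eventually_ge_atTop 2), eventually_ge_atTop 2]
      with n h2 hn
    have hn0 : (0:ℝ) < n := by exact_mod_cast (by omega : 1 ≤ n)
    have hL : (0:ℝ) < Real.log n := Real.log_pos (by exact_mod_cast hn)
    have hk_le : (kk n : ℝ) ≤ (n : ℝ) / Real.log n := Nat.floor_le (by positivity)
    rw [div_le_div_iff₀ hn0 hL, one_mul]
    calc (kk n : ℝ) * Real.log n ≤ ((n : ℝ) / Real.log n) * Real.log n :=
          mul_le_mul_of_nonneg_right hk_le hL.le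
      _ = n := by field_simp

lemma G2 : Tendsto (fun n : ℕ => Real.log (kk n) / Real.log n) atTop (nhds 1) := by
  have base : Tendsto (fun n : ℕ =>
      (Real.log (kk n) - (Real.log n - Real.log (Real.log n))) * (1 / Real.log n)
        + (1 - Real.log (Real.log n) / Real.log n)) atTop (nhds 1) := by
    have := (E1.mul tendsto_invL).add
      ((tendsto_const_nhds : Tendsto (fun _ : ℕ => (1:ℝ)) atTop (nhds 1)).sub tendsto_D)
    simpa using this
  refine base.congr' ?_
  filter_upwards [tendsto_L.eventually (eventually_gt_atTop 0)] with n hL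
  field_simp
  ring

lemma G3 : Tendsto (fun n : ℕ => (kk n : ℝ) * Real.log (kk n) / n) atTop (nhds 1) := by
  have base := G1.mul G2
  rw [mul_one] at base
  refine base.congr' ?_
  filter_upwards [tendsto_L.eventually (eventually_gt_atTop 0), eventually_ge_atTop 1]
    with n hL hn
  have hn0 : (0:ℝ) < n := by exact_mod_cast hn
  field_simp

lemma GA : Tendsto (fun n : ℕ => (kk n : ℝ) * Real.log (2 * kk n) / n) atTop (nhds 1) := by
  have base : Tendsto (fun n : ℕ =>
      (kk n : ℝ) * Real.log (kk n) / n + Real.log 2 * ((kk n : ℝ) / n)) atTop (nhds 1) := by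
    have := G3.add (G4.const_mul (Real.log 2))
    simpa [mul_comm] using this
  refine base.congr' ?_
  filter_upwards [tendsto_t.eventually (eventually_ge_atTop 2), eventually_ge_atTop 1]
    with n h2 hn
  have hk1 : 1 ≤ kk n := kk_ge_one h2
  have hk0 : (0:ℝ) < kk n := by exact_mod_cast hk1
  have hn0 : (0:ℝ) < n := by exact_mod_cast hn
  have hlog : Real.log (2 * (kk n : ℝ)) = Real.log 2 + Real.log (kk n) :=
    Real.log_mul two_ne_zero (ne_of_gt hk0)
  rw [hlog]
  field_simp
  ring

lemma E6 : Tendsto (fun n : ℕ => Real.log (kk n)! / n) atTop (nhds 1) := by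
  have hlb : Tendsto (fun n : ℕ => (kk n : ℝ) * Real.log (kk n) / n - (kk n : ℝ) / n)
      atTop (nhds 1) := by simpa using G3.sub G4
  refine tendsto_of_tendsto_of_tendsto_of_le_of_le' hlb G3 ?_ ?_
  · filter_upwards [eventually_ge_atTop 1] with n hn
    have hn0 : (0:ℝ) < n := by exact_mod_cast hn
    have h := log_factorial_lb (kk n)
    rw [sub_le_iff_le_add, ← add_div, div_le_div_iff₀ hn0 hn0]
    nlinarith
  · filter_upwards [eventually_ge_atTop 1] with n hn
    have hn0 : (0:ℝ) < n := by exact_mod_cast hn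
    have h := log_factorial_ub' (kk n)
    exact div_le_div_of_nonneg_right h hn0.le

lemma E5 : Tendsto (fun n : ℕ => Real.log (2 * kk n)! / (2 * n)) atTop (nhds 1) := by
  have hlb : Tendsto (fun n : ℕ => (kk n : ℝ) * Real.log (2 * kk n) / n - (kk n : ℝ) / n)
      atTop (nhds 1) := by simpa using GA.sub G4
  refine tendsto_of_tendsto_of_tendsto_of_le_of_le' hlb GA ?_ ?_
  · filter_upwards [eventually_ge_atTop 1] with n hn
    have hn0 : (0:ℝ) < n := by exact_mod_cast hn
    have h := log_factorial_lb (2 * kk n)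
    have hcast : ((2 * kk n : ℕ) : ℝ) = 2 * (kk n : ℝ) := by push_cast; ring
    rw [hcast] at h
    have hgoal : (kk n : ℝ) * Real.log (2 * kk n) / n - (kk n : ℝ) / n
        = (2 * (kk n : ℝ) * Real.log (2 * (kk n : ℝ)) - 2 * kk n) / (2 * n) := by
      field_simp
    rw [hgoal, div_le_div_iff₀ (by positivity) (by positivity)]
    nlinarith
  · filter_upwards [eventually_ge_atTop 1] with n hn
    have hn0 : (0:ℝ) < n := by exact_mod_cast hn
    have h := log_factorial_ub' (2 * kk n)
    have hcast : ((2 * kk n : ℕ) : ℝ) = 2 * (kk n : ℝ) := by push_cast; ring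
    rw [hcast] at h
    rw [div_le_div_iff₀ (by positivity) hn0]
    nlinarith

lemma hdouble : Tendsto (fun n : ℕ => 2 * n) atTop atTop := by
  refine tendsto_atTop_atTop.mpr fun b => ⟨b, fun a ha => by omega⟩

lemma tendsto_inv2n : Tendsto (fun n : ℕ => 1 / (2 * (n : ℝ))) atTop (nhds 0) := by
  have := tendsto_invn.const_mul (1/2 : ℝ)
  rw [mul_zero] at this
  refine this.congr fun n => ?_
  field_simp

noncomputable def lo (n : ℕ) : ℝ :=
  (1 / (2 * (n : ℝ))) * (1 + 2 * n * Real.log (2 * (kk n : ℝ)) - Real.log (2 * kk n)!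
    - 2 * Real.log n ! - 2 * Real.exp (xx n) + 2 * n * Real.log (xx n))

noncomputable def hi (n : ℕ) : ℝ :=
  (1 / (2 * (n : ℝ))) * (1 + Real.log (2 * n)! + Real.exp (xx (2 * n))
    - 2 * n * Real.log (xx (2 * n)) - 2 * n * Real.log (kk n) + 2 * Real.log (kk n)!)

lemma tendsto_lo : Tendsto lo atTop (nhds (Real.log 2)) := by
  have hF : Tendsto (fun n : ℕ => Real.log 2 + 1 / (2 * (n : ℝ))
      + (Real.log (kk n) - (Real.log n - Real.log (Real.log n)))
      + (Real.log (xx n) - Real.log (Real.log n))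
      - (Real.log n ! / n - (Real.log n - 1))
      - (Real.log (2 * kk n)! / (2 * n) - 1)
      - 1 / Real.log n) atTop (nhds (Real.log 2)) := by
    have h5 : Tendsto (fun n : ℕ => Real.log (2 * kk n)! / (2 * n) - 1) atTop (nhds 0) := by
      simpa using E5.sub (tendsto_const_nhds : Tendsto (fun _ : ℕ => (1:ℝ)) atTop (nhds 1))
    have := ((((((tendsto_const_nhds :
        Tendsto (fun _ : ℕ => Real.log 2) atTop (nhds (Real.log 2))).add
      tendsto_inv2n).add E1).add E2).sub E4).sub h5).sub tendsto_invL
    simpa using this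
  refine hF.congr' ?_
  filter_upwards [tendsto_t.eventually (eventually_ge_atTop 2), eventually_ge_atTop 2]
    with n h2 hn
  have hn0 : (0:ℝ) < n := by exact_mod_cast (by omega : 1 ≤ n)
  have hL : (0:ℝ) < Real.log n := Real.log_pos (by exact_mod_cast hn)
  have hk1 : 1 ≤ kk n := kk_ge_one h2
  have hk0 : (0:ℝ) < kk n := by exact_mod_cast hk1
  have hexp : Real.exp (xx n) = n / Real.log n := exp_xx_eq hn
  have hlog2k : Real.log (2 * (kk n : ℝ)) = Real.log 2 + Real.log (kk n) :=
    Real.log_mul two_ne_zero (ne_of_gt hk0)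
  rw [lo, hexp, hlog2k]
  field_simp
  ring

lemma tendsto_hi : Tendsto hi atTop (nhds (Real.log 2)) := by
  have hG : Tendsto (fun n : ℕ => Real.log 2 + 1 / (2 * (n : ℝ))
      + (Real.log (2 * n)! / ((2 * n : ℕ) : ℝ) - (Real.log ((2 * n : ℕ) : ℝ) - 1))
      + 1 / Real.log ((2 * n : ℕ) : ℝ)
      - (Real.log (xx (2 * n)) - Real.log (Real.log ((2 * n : ℕ) : ℝ)))
      - (Real.log (kk n) - (Real.log n - Real.log (Real.log n)))
      - (Real.log (Real.log ((2 * n : ℕ) : ℝ)) - Real.log (Real.log n))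
      + (Real.log (kk n)! / n - 1)) atTop (nhds (Real.log 2)) := by
    have h4 : Tendsto (fun n : ℕ =>
        Real.log (2 * n)! / ((2 * n : ℕ) : ℝ) - (Real.log ((2 * n : ℕ) : ℝ) - 1))
        atTop (nhds 0) := E4.comp hdouble
    have h2' : Tendsto (fun n : ℕ =>
        Real.log (xx (2 * n)) - Real.log (Real.log ((2 * n : ℕ) : ℝ))) atTop (nhds 0) :=
      E2.comp hdouble
    have hinv : Tendsto (fun n : ℕ => 1 / Real.log ((2 * n : ℕ) : ℝ)) atTop (nhds 0) :=
      tendsto_invL.comp hdouble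
    have h6 : Tendsto (fun n : ℕ => Real.log (kk n)! / n - 1) atTop (nhds 0) := by
      simpa using E6.sub (tendsto_const_nhds : Tendsto (fun _ : ℕ => (1:ℝ)) atTop (nhds 1))
    have := (((((((tendsto_const_nhds :
        Tendsto (fun _ : ℕ => Real.log 2) atTop (nhds (Real.log 2))).add
      tendsto_inv2n).add h4).add hinv).sub h2').sub E1).sub E3).add h6
    simpa using this
  refine hG.congr' ?_
  filter_upwards [tendsto_t.eventually (eventually_ge_atTop 2), eventually_ge_atTop 2]
    with n h2 hn
  have hn0 : (0:ℝ) < n := by exact_mod_cast (by omega : 1 ≤ n)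
  have hL : (0:ℝ) < Real.log n := Real.log_pos (by exact_mod_cast hn)
  have hcast : ((2 * n : ℕ) : ℝ) = 2 * n := by push_cast; ring
  have hL2pos : (0:ℝ) < Real.log ((2 * n : ℕ) : ℝ) := by
    rw [hcast]
    refine Real.log_pos ?_
    have h2n : (2:ℝ) ≤ (n : ℝ) := by exact_mod_cast hn
    nlinarith
  have hL2 : Real.log ((2 * n : ℕ) : ℝ) = Real.log 2 + Real.log n := by
    rw [hcast, Real.log_mul two_ne_zero (ne_of_gt hn0)]
  have hexp2 : Real.exp (xx (2 * n)) = ((2 * n : ℕ) : ℝ) / Real.log ((2 * n : ℕ) : ℝ) :=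
    exp_xx_eq (by omega)
  rw [hi, hexp2, hL2]
  rw [hcast]
  field_simp
  ring

noncomputable def Q (n : ℕ) : ℝ :=
  (1 / (2 * (n : ℝ))) * (1 + Real.log (S (2 * n)) - 2 * Real.log (S n))

lemma xx_pos {n : ℕ} (hn : 2 ≤ n) : 0 < xx n := by
  have hL : (0:ℝ) < Real.log n := Real.log_pos (by exact_mod_cast hn)
  have := Real.log_le_sub_one_of_pos hL
  rw [xx]; linarith

lemma sandwich : ∀ᶠ n in atTop, lo n ≤ Q n ∧ Q n ≤ hi n := by
  filter_upwards [tendsto_t.eventually (eventually_ge_atTop 2), eventually_ge_atTop 2]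
    with n h2 hn
  have hn0 : (0:ℝ) < n := by exact_mod_cast (by omega : 1 ≤ n)
  have hk1 : 1 ≤ kk n := kk_ge_one h2
  have hk0 : (0:ℝ) < kk n := by exact_mod_cast hk1
  have hxx : 0 < xx n := xx_pos hn
  have hxx2 : 0 < xx (2 * n) := xx_pos (by omega)
  have hcast2k : ((2 * kk n : ℕ) : ℝ) = 2 * (kk n : ℝ) := by push_cast; ring
  have hcast2n : ((2 * n : ℕ) : ℝ) = 2 * (n : ℝ) := by push_cast; ring
  -- lower bound for log S (2n)
  have hA : 2 * (n:ℝ) * Real.log (2 * (kk n : ℝ)) - Real.log (2 * kk n)!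
      ≤ Real.log (S (2 * n)) := by
    have h := S_lower (2 * n) (2 * kk n)
    have hpos : (0:ℝ) < ((2 * kk n : ℕ) : ℝ) ^ (2 * n) / (2 * kk n)! := by
      rw [hcast2k]; positivity
    have hlog := Real.log_le_log hpos h
    rw [Real.log_div (ne_of_gt (by rw [hcast2k]; positivity)) (by positivity),
      Real.log_pow, hcast2k] at hlog
    calc 2 * (n:ℝ) * Real.log (2 * (kk n : ℝ)) - Real.log (2 * kk n)!
        = ((2 * n : ℕ) : ℝ) * Real.log (2 * (kk n : ℝ)) - Real.log (2 * kk n)! := by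
          rw [hcast2n]
      _ ≤ Real.log (S (2 * n)) := hlog
  -- upper bound for log S n
  have hB : Real.log (S n) ≤ Real.log n ! + Real.exp (xx n) - n * Real.log (xx n) := by
    have h := S_upper n hxx
    have hlog := Real.log_le_log (S_pos n) h
    rw [Real.log_div (by positivity) (by positivity), Real.log_mul (by positivity)
      (by positivity), Real.log_exp, Real.log_pow] at hlog
    linarith
  -- upper bound for log S (2n)
  have hC : Real.log (S (2 * n)) ≤ Real.log (2 * n)! + Real.exp (xx (2 * n))
      - 2 * (n:ℝ) * Real.log (xx (2 * n)) := by
    have h := S_upper (2 * n) hxx2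
    have hlog := Real.log_le_log (S_pos (2 * n)) h
    rw [Real.log_div (by positivity) (by positivity), Real.log_mul (by positivity)
      (by positivity), Real.log_exp, Real.log_pow, hcast2n] at hlog
    linarith
  -- lower bound for log S n
  have hD : (n:ℝ) * Real.log (kk n) - Real.log (kk n)! ≤ Real.log (S n) := by
    have h := S_lower n (kk n)
    have hpos : (0:ℝ) < (kk n : ℝ) ^ n / (kk n)! := by positivity
    have hlog := Real.log_le_log hpos h
    rw [Real.log_div (by positivity) (by positivity), Real.log_pow] at hlog
    exact hlog
  constructor
  · rw [lo, Q]
    apply mul_le_mul_of_nonneg_left _ (by positivity)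
    linarith
  · rw [hi, Q]
    apply mul_le_mul_of_nonneg_left _ (by positivity)
    linarith

lemma tendsto_Q : Tendsto Q atTop (nhds (Real.log 2)) := by
  refine tendsto_of_tendsto_of_tendsto_of_le_of_le' tendsto_lo tendsto_hi
    (sandwich.mono fun n h => h.1) (sandwich.mono fun n h => h.2)

/-- `lim_{n→∞} (1/(2n)) * log (bellTwo (2n) / bellTwo n ^ 2) = log 2`. -/
theorem bellTwo_ratio_log_limit :
    Filter.Tendsto
      (fun n : ℕ => (1 / (2 * (n : ℝ))) * Real.log (bellTwo (2 * n) / bellTwo n ^ 2))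
      Filter.atTop (nhds (Real.log 2)) := by
  refine tendsto_Q.congr' ?_
  filter_upwards [eventually_ge_atTop 1] with n hn
  have hS2 := S_pos (2 * n)
  have hS := S_pos n
  have hr : bellTwo (2 * n) / bellTwo n ^ 2 = Real.exp 1 * S (2 * n) / (S n) ^ 2 := by
    rw [bellTwo_eq, bellTwo_eq]
    have he : Real.exp 1 ^ 2 = Real.exp 2 := by
      rw [← Real.exp_nat_mul]; norm_num
    field_simp
  rw [Q, hr, Real.log_div (by positivity) (by positivity),
    Real.log_mul (by positivity) (by positivity), Real.log_exp, Real.log_pow]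
  push_cast
  ring
end

section
/- For every integer k ≥ 2, the Bell numbers of order k satisfy the growth condition (1.2): limsup_{n→∞} ( (n!/b_k(n)) · inf_{x>0} G(x)/xⁿ )^{1/n} < ∞, where G(x) = Σ_{n≥0} (b_k(n)/n!)·xⁿ = exp_k(x)/exp_k(0). -/
open scoped Nat

-- basic lemmas
lemma expIter_succ (k : ℕ) (x : ℝ) : expIter (k+1) x = Real.exp (expIter k x) := rfl

lemma expIter_succ_comm (k : ℕ) (x : ℝ) : expIter (k+1) x = expIter k (Real.exp x) := by
  induction k generalizing x with
  | zero => rfl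
  | succ k ih => rw [expIter_succ, ih, expIter_succ]

lemma expIter_pos (k : ℕ) {x : ℝ} (hx : 0 < x) : 0 < expIter k x := by
  cases k with
  | zero => exact hx
  | succ k => exact Real.exp_pos _

lemma expIter_strictMono (k : ℕ) : StrictMono (expIter k) := by
  induction k with
  | zero => exact fun a b h => h
  | succ k ih => exact fun a b h => Real.exp_lt_exp.2 (ih h)

lemma le_expIter (k : ℕ) {x : ℝ} (hx : 0 ≤ x) : x ≤ expIter k x := by
  induction k with
  | zero => exact le_rfl
  | succ k ih => calc x ≤ expIter k x := ih
    _ ≤ expIter k x + 1 := by linarith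
    _ ≤ Real.exp (expIter k x) := Real.add_one_le_exp _

-- Dobinski coefficients: expIter (ℓ+1) x = ∑ Dob ℓ n * x^n
noncomputable def Dob : ℕ → ℕ → ℝ
  | 0 => fun n => ((n ! : ℝ))⁻¹
  | ℓ + 1 => fun n => ∑' j : ℕ, Dob ℓ j * (j : ℝ) ^ n / n !

lemma dob_base (x : ℝ) : HasSum (fun n => Dob 0 n * x ^ n) (expIter 1 x) := by
  have h := NormedSpace.expSeries_div_hasSum_exp x
  rw [← Real.exp_eq_exp_ℝ] at h
  have : expIter 1 x = Real.exp x := rfl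
  rw [this]
  convert h using 2 with n
  · rfl
  rw [Dob]
  field_simp [mul_comm]

lemma expSeriesReal (t : ℝ) : HasSum (fun n => t ^ n / n !) (Real.exp t) := by
  have h := NormedSpace.expSeries_div_hasSum_exp t
  rwa [← Real.exp_eq_exp_ℝ] at h

lemma dob_master (ℓ : ℕ) :
    (∀ n, 0 < Dob ℓ n) ∧ ∀ x : ℝ, HasSum (fun n => Dob ℓ n * x ^ n) (expIter (ℓ+1) x) := by
  induction ℓ with
  | zero =>
    refine ⟨fun n => by rw [Dob]; positivity, dob_base⟩
  | succ ℓ ih =>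
    obtain ⟨hpos, hsum⟩ := ih
    have hA : ∀ x : ℝ, Summable (fun j => Dob ℓ j * x ^ j) := fun x => (hsum x).summable
    have hB : ∀ n : ℕ, Summable (fun j : ℕ => Dob ℓ j * (j : ℝ) ^ n) := by
      intro n
      refine Summable.of_nonneg_of_le (fun j => mul_nonneg (hpos j).le (by positivity)) (fun j => ?_) (hA (Real.exp n))
      have h1 : (j : ℝ) ^ n ≤ (Real.exp j) ^ n := by
        refine pow_le_pow_left₀ (Nat.cast_nonneg j) ?_ n
        calc (j:ℝ) ≤ j + 1 := by linarith
        _ ≤ Real.exp j := Real.add_one_le_exp _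
      have h2 : (Real.exp (j:ℝ)) ^ n = (Real.exp (n:ℕ)) ^ j := by
        rw [← Real.exp_nat_mul, ← Real.exp_nat_mul, mul_comm]
      exact mul_le_mul_of_nonneg_left (h2 ▸ h1) (hpos j).le
    have hBdiv : ∀ n : ℕ, Summable (fun j : ℕ => Dob ℓ j * (j : ℝ) ^ n / n !) :=
      fun n => (hB n).div_const _
    have hpos' : ∀ n, 0 < Dob (ℓ+1) n := by
      intro n
      rw [Dob]
      refine Summable.tsum_pos (hBdiv n) (fun j => div_nonneg (mul_nonneg (hpos j).le (by positivity)) (by positivity)) 1 ?_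
      have := hpos 1
      positivity
    refine ⟨hpos', fun x => ?_⟩
    set F : ℕ × ℕ → ℝ := fun p => Dob ℓ p.1 * (p.1 : ℝ) ^ p.2 * x ^ p.2 / p.2 ! with hF_def
    have rows : ∀ j : ℕ, HasSum (fun n => F (j, n)) (Dob ℓ j * Real.exp ((j:ℝ) * x)) := by
      intro j
      have h := (expSeriesReal ((j:ℝ) * x)).mul_left (Dob ℓ j)
      have he : (fun n => Dob ℓ j * (((j:ℝ) * x) ^ n / n !)) = fun n => F (j, n) := by
        funext n; simp only [hF_def, mul_pow]; ring
      rwa [he] at h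
    have rowsAbs : ∀ j : ℕ, HasSum (fun n => ‖F (j, n)‖) (Dob ℓ j * Real.exp ((j:ℝ) * |x|)) := by
      intro j
      have h := (expSeriesReal ((j:ℝ) * |x|)).mul_left (Dob ℓ j)
      have he : (fun n => Dob ℓ j * (((j:ℝ) * |x|) ^ n / n !)) = fun n => ‖F (j, n)‖ := by
        funext n
        simp only [hF_def, mul_pow, Real.norm_eq_abs, abs_div, abs_mul, abs_pow, abs_of_nonneg
          (hpos j).le, Nat.abs_cast, abs_of_nonneg (show (0:ℝ) ≤ (n ! : ℝ) by positivity)]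
        ring
      rwa [he] at h
    have habs : Summable (fun p => ‖F p‖) := by
      refine (summable_prod_of_nonneg (fun p => norm_nonneg _)).2 ⟨fun j => (rowsAbs j).summable, ?_⟩
      have he : (fun j : ℕ => ∑' n, ‖F (j, n)‖) = fun j => Dob ℓ j * (Real.exp |x|) ^ j := by
        funext j
        rw [(rowsAbs j).tsum_eq, ← Real.exp_nat_mul, mul_comm (j:ℝ)]
      rw [he]
      exact hA _
    have hF : Summable F := habs.of_norm
    have hval : (∑' p, F p) = expIter (ℓ+2) x := by
      have h1 : HasSum (fun j => Dob ℓ j * Real.exp ((j:ℝ) * x)) (∑' p, F p) :=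
        hF.hasSum.prod_fiberwise rows
      have h2 : HasSum (fun j : ℕ => Dob ℓ j * Real.exp ((j:ℝ) * x))
          (expIter (ℓ+1) (Real.exp x)) := by
        have h := hsum (Real.exp x)
        have he : (fun j : ℕ => Dob ℓ j * (Real.exp x) ^ j)
            = fun j : ℕ => Dob ℓ j * Real.exp ((j:ℝ) * x) := by
          funext j; rw [← Real.exp_nat_mul]
        rwa [he] at h
      rw [h1.unique h2, ← expIter_succ_comm]
    have cols : ∀ n : ℕ, HasSum (fun j => F (j, n)) (Dob (ℓ+1) n * x ^ n) := by
      intro n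
      have h := ((hBdiv n).hasSum).mul_right (x ^ n)
      have he : (fun j : ℕ => Dob ℓ j * (j:ℝ) ^ n / n ! * x ^ n) = fun j => F (j, n) := by
        funext j; simp only [hF_def]; ring
      rw [he] at h
      have hd : Dob (ℓ+1) n = ∑' j : ℕ, Dob ℓ j * (j:ℝ) ^ n / n ! := by rw [Dob]
      rwa [← hd] at h
    have hswap : HasSum (F ∘ (Equiv.prodComm ℕ ℕ)) (∑' p, F p) :=
      (Equiv.hasSum_iff _).2 hF.hasSum
    have final : HasSum (fun n => Dob (ℓ+1) n * x ^ n) (∑' p, F p) :=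
      hswap.prod_fiberwise (fun n => cols n)
    rwa [hval] at final

noncomputable def dobSeries (ℓ : ℕ) : FormalMultilinearSeries ℝ ℝ ℝ :=
  fun n => (Dob ℓ n) • ContinuousMultilinearMap.mkPiAlgebraFin ℝ n ℝ

lemma dob_hasFPower (ℓ : ℕ) : HasFPowerSeriesOnBall (expIter (ℓ+1)) (dobSeries ℓ) 0 ⊤ := by
  have hnorm : ∀ n, ‖dobSeries ℓ n‖ = Dob ℓ n := by
    intro n
    have h := norm_smul (Dob ℓ n) (ContinuousMultilinearMap.mkPiAlgebraFin ℝ n ℝ)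
    rw [dobSeries, h, ContinuousMultilinearMap.norm_mkPiAlgebraFin,
      Real.norm_eq_abs, abs_of_nonneg ((dob_master ℓ).1 n).le, mul_one]
  have happ : ∀ (n : ℕ) (y : ℝ), (dobSeries ℓ n fun _ => y) = Dob ℓ n * y ^ n := by
    intro n y
    rw [dobSeries]
    simp [ContinuousMultilinearMap.mkPiAlgebraFin_apply, List.ofFn_const, List.prod_replicate,
      smul_eq_mul]
  constructor
  · refine le_of_eq (FormalMultilinearSeries.radius_eq_top_of_summable_norm _ fun r => ?_).symm
    have h := ((dob_master ℓ).2 (r:ℝ)).summable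
    refine h.congr fun n => ?_
    rw [hnorm]
  · exact ENNReal.zero_lt_top
  · intro y _
    have h := (dob_master ℓ).2 y
    rw [zero_add]
    have he : (fun n => dobSeries ℓ n fun _ => y) = fun n => Dob ℓ n * y ^ n :=
      funext fun n => happ n y
    rw [he]
    exact h

lemma iteratedDeriv_expIter (ℓ n : ℕ) :
    iteratedDeriv n (expIter (ℓ+1)) 0 = (n ! : ℝ) * Dob ℓ n := by
  have h := (dob_hasFPower ℓ).factorial_smul (1 : ℝ) n
  rw [iteratedDeriv_eq_iteratedFDeriv, ← h, dobSeries]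
  simp [ContinuousMultilinearMap.mkPiAlgebraFin_apply, List.ofFn_const, List.prod_replicate,
    smul_eq_mul, nsmul_eq_mul]

noncomputable def logIter : ℕ → ℝ → ℝ
  | 0 => fun t => t
  | ℓ + 1 => fun t => logIter ℓ (Real.log t)

lemma logIter_spec (ℓ : ℕ) : ∀ {t : ℝ}, expIter ℓ 1 ≤ t →
    1 ≤ logIter ℓ t ∧ expIter ℓ (logIter ℓ t) = t := by
  induction ℓ with
  | zero => intro t ht; exact ⟨ht, rfl⟩
  | succ ℓ ih =>
    intro t ht
    have htpos : 0 < t := lt_of_lt_of_le (Real.exp_pos _) ht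
    have h2 : expIter ℓ 1 ≤ Real.log t := by
      rw [Real.le_log_iff_exp_le htpos]
      exact ht
    obtain ⟨h1, heq⟩ := ih h2
    refine ⟨h1, ?_⟩
    show expIter (ℓ+1) (logIter ℓ (Real.log t)) = t
    rw [expIter_succ, heq, Real.exp_log htpos]

lemma logIter_le_self (ℓ : ℕ) {t : ℝ} (ht : expIter ℓ 1 ≤ t) : logIter ℓ t ≤ t := by
  obtain ⟨h1, heq⟩ := logIter_spec ℓ ht
  calc logIter ℓ t ≤ expIter ℓ (logIter ℓ t) := le_expIter ℓ (by linarith)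
  _ = t := heq

lemma logIter_mono (ℓ : ℕ) {s t : ℝ} (hs : expIter ℓ 1 ≤ s) (hst : s ≤ t) :
    logIter ℓ s ≤ logIter ℓ t := by
  obtain ⟨_, hes⟩ := logIter_spec ℓ hs
  obtain ⟨_, het⟩ := logIter_spec ℓ (hs.trans hst)
  exact (expIter_strictMono ℓ).le_iff_le.1 (by rw [hes, het]; exact hst)

lemma logIter_succ_eq_log (ℓ : ℕ) {t : ℝ} (ht : expIter ℓ 1 ≤ t) :
    logIter (ℓ+1) t = Real.log (logIter ℓ t) := by
  induction ℓ generalizing t with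
  | zero => rfl
  | succ ℓ ih =>
    have htpos : 0 < t := lt_of_lt_of_le (Real.exp_pos _) ht
    have h2 : expIter ℓ 1 ≤ Real.log t := by
      rw [Real.le_log_iff_exp_le htpos]; exact ht
    show logIter (ℓ+1) (Real.log t) = Real.log (logIter ℓ (Real.log t))
    exact ih h2

lemma dob_summable_pow (ℓ n : ℕ) : Summable (fun j : ℕ => Dob ℓ j * (j : ℝ) ^ n / n !) := by
  obtain ⟨hpos, hsum⟩ := dob_master ℓ
  refine Summable.div_const ?_ _
  refine Summable.of_nonneg_of_le (fun j => mul_nonneg (hpos j).le (by positivity))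
    (fun j => ?_) ((hsum (Real.exp n)).summable)
  have h1 : (j : ℝ) ^ n ≤ (Real.exp j) ^ n := by
    refine pow_le_pow_left₀ (Nat.cast_nonneg j) ?_ n
    calc (j:ℝ) ≤ j + 1 := by linarith
    _ ≤ Real.exp j := Real.add_one_le_exp _
  have h2 : (Real.exp (j:ℝ)) ^ n = (Real.exp (n:ℕ)) ^ j := by
    rw [← Real.exp_nat_mul, ← Real.exp_nat_mul, mul_comm]
  exact mul_le_mul_of_nonneg_left (h2 ▸ h1) (hpos j).le

lemma dob_single_le (ℓ n L : ℕ) : Dob ℓ L * (L : ℝ) ^ n / n ! ≤ Dob (ℓ+1) n := by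
  have hd : Dob (ℓ+1) n = ∑' j : ℕ, Dob ℓ j * (j:ℝ) ^ n / n ! := by rw [Dob]
  rw [hd]
  refine Summable.le_tsum (dob_summable_pow ℓ n) L (fun j _ => ?_)
  have := (dob_master ℓ).1 j
  positivity

lemma expIter_one_le_succ (ℓ : ℕ) : expIter ℓ 1 ≤ expIter (ℓ+1) 1 := by
  rw [expIter_succ_comm]
  refine (expIter_strictMono ℓ).monotone ?_
  have := Real.add_one_le_exp (1:ℝ)
  linarith

set_option maxHeartbeats 1000000 in
lemma main_bound (ℓ : ℕ) : ∃ c : ℝ, 1 ≤ c ∧ ∀ᶠ n : ℕ in Filter.atTop,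
    1 ≤ logIter ℓ n ∧ expIter ℓ (logIter ℓ n) = (n:ℝ) ∧
    Real.exp n ≤ Real.exp (c * n) * (logIter ℓ n) ^ n * Dob ℓ n := by
  induction ℓ with
  | zero =>
    refine ⟨1, le_rfl, ?_⟩
    filter_upwards [Filter.eventually_ge_atTop 1] with n hn1
    have hn1' : (1:ℝ) ≤ (n:ℝ) := by exact_mod_cast hn1
    refine ⟨hn1', rfl, ?_⟩
    have hd : Dob 0 n = ((n ! : ℝ))⁻¹ := by rw [Dob]
    have hfact : (n ! : ℝ) ≤ (n:ℝ) ^ n := by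
      exact_mod_cast Nat.factorial_le_pow n
    have h1 : (1:ℝ) ≤ (n:ℝ) ^ n * ((n ! : ℝ))⁻¹ := by
      rw [← div_eq_mul_inv, le_div_iff₀ (by positivity)]
      simpa using hfact
    have : logIter 0 (n:ℝ) = (n:ℝ) := rfl
    rw [this, hd, one_mul, mul_assoc]
    exact le_mul_of_one_le_right (Real.exp_pos _).le h1
  | succ ℓ ih =>
    obtain ⟨c, hc1, hev⟩ := ih
    obtain ⟨N₀, hN₀⟩ := Filter.eventually_atTop.1 hev
    refine ⟨c + 4, by linarith, ?_⟩
    set M : ℝ := max ((N₀:ℝ) + 1) (max 1 (expIter ℓ 1)) with hM_def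
    have hM1 : 1 ≤ M := le_max_of_le_right (le_max_left _ _)
    have hMpos : 0 < M := lt_of_lt_of_le one_pos hM1
    have hlogO : ∀ᶠ x : ℝ in Filter.atTop, ‖Real.log x‖ ≤ (2*M)⁻¹ * ‖x‖ :=
      Real.isLittleO_log_id_atTop.def (by positivity)
    have hE1 : ∀ᶠ n : ℕ in Filter.atTop, ‖Real.log (n:ℝ)‖ ≤ (2*M)⁻¹ * ‖(n:ℝ)‖ :=
      tendsto_natCast_atTop_atTop.eventually hlogO
    have hEA1 : ∀ᶠ n : ℕ in Filter.atTop, 2*M*(c+1) ≤ (n:ℝ) :=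
      tendsto_natCast_atTop_atTop.eventually_ge_atTop _
    have hEA2 : ∀ᶠ n : ℕ in Filter.atTop, expIter (ℓ+1) 1 ≤ (n:ℝ) :=
      tendsto_natCast_atTop_atTop.eventually_ge_atTop _
    have hEA3 : ∀ᶠ n : ℕ in Filter.atTop, expIter (ℓ+1) (c+1) ≤ (n:ℝ) :=
      tendsto_natCast_atTop_atTop.eventually_ge_atTop _
    filter_upwards [hE1, hEA1, hEA2, hEA3, Filter.eventually_ge_atTop 1] with n hlogn hA1 hA2 hA3 hn1
    have hn1' : (1:ℝ) ≤ (n:ℝ) := by exact_mod_cast hn1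
    have hn0 : (0:ℝ) < (n:ℝ) := by linarith
    -- xi' at level ℓ+1 and Ξ at level ℓ
    obtain ⟨hξ'1, hξ'e⟩ := logIter_spec (ℓ+1) hA2
    set ξ' := logIter (ℓ+1) (n:ℝ) with hξ'_def
    have hA2' : expIter ℓ 1 ≤ (n:ℝ) := (expIter_one_le_succ ℓ).trans hA2
    obtain ⟨hΞ1, hΞe⟩ := logIter_spec ℓ hA2'
    set Ξ := logIter ℓ (n:ℝ) with hΞ_def
    have hξ'log : ξ' = Real.log Ξ := logIter_succ_eq_log ℓ hA2'
    have hΞn : Ξ ≤ (n:ℝ) := logIter_le_self ℓ hA2'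
    have hΞ0 : (0:ℝ) < Ξ := by linarith
    have hξ'c : c + 1 ≤ ξ' := by
      refine (expIter_strictMono (ℓ+1)).le_iff_le.1 ?_
      rw [hξ'e]; exact hA3
    refine ⟨hξ'1, hξ'e, ?_⟩
    set w : ℝ := c + 1 + ξ' with hw_def
    have hw3 : (3:ℝ) ≤ w := by linarith
    have hw0 : (0:ℝ) < w := by linarith
    have hwξ : w ≤ 2 * ξ' := by linarith
    have hξ'logn : ξ' ≤ Real.log n := by
      rw [hξ'log]
      exact Real.log_le_log hΞ0 hΞn
    have hlogn_nonneg : 0 ≤ Real.log n := Real.log_nonneg hn1'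
    have hlog2M : Real.log n ≤ (2*M)⁻¹ * n := by
      have h := hlogn
      rwa [Real.norm_eq_abs, Real.norm_eq_abs, abs_of_nonneg hlogn_nonneg,
        abs_of_nonneg hn0.le] at h
    have hMw : M * w ≤ n := by
      have h1 : M * ((2*M)⁻¹ * n) = n/2 := by field_simp
      have h2 : M * ξ' ≤ M * ((2*M)⁻¹ * n) :=
        mul_le_mul_of_nonneg_left (hξ'logn.trans hlog2M) hMpos.le
      have h3 : M * (c+1) ≤ n/2 := by nlinarith
      calc M * w = M * (c+1) + M * ξ' := by rw [hw_def]; ring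
      _ ≤ n/2 + n/2 := by rw [h1] at h2; exact add_le_add h3 h2
      _ = n := by ring
    have hwn : w ≤ (n:ℝ) := by nlinarith
    set L : ℕ := ⌈(n:ℝ)/w⌉₊ with hL_def
    have hLlow : (n:ℝ)/w ≤ L := Nat.le_ceil _
    have hLhigh : (L:ℝ) ≤ (n:ℝ)/w + 1 := (Nat.ceil_lt_add_one (by positivity)).le
    have hML : M ≤ (n:ℝ)/w := (le_div_iff₀ hw0).2 hMw
    have hL1 : (1:ℝ) ≤ (L:ℝ) := le_trans (hM1.trans hML) hLlow
    have hL0 : (0:ℝ) < (L:ℝ) := by linarith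
    have hLN₀ : N₀ ≤ L := by
      have : (N₀:ℝ) + 1 ≤ (L:ℝ) := le_trans ((le_max_left _ _).trans hML) hLlow
      exact_mod_cast le_of_lt (by linarith : (N₀:ℝ) < (L:ℝ))
    have hLT : expIter ℓ 1 ≤ (L:ℝ) :=
      le_trans ((le_max_of_le_right (le_max_right _ _)).trans hML) hLlow
    have hLn : (L:ℝ) ≤ (n:ℝ) := by
      have h1 : (n:ℝ)/w ≤ n/3 := by
        apply div_le_div_of_nonneg_left hn0.le (by norm_num) hw3
      have h2 : 2*M*(c+1) ≤ (n:ℝ) := hA1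
      have hn4 : (4:ℝ) ≤ (n:ℝ) := by
        have ha : (2:ℝ) ≤ 2*M := by linarith
        have hb : (2:ℝ) ≤ c+1 := by linarith
        have hab : (2:ℝ)*2 ≤ (2*M)*(c+1) := mul_le_mul ha hb (by norm_num) (by linarith)
        calc (4:ℝ) = 2*2 := by norm_num
        _ ≤ 2*M*(c+1) := hab
        _ ≤ (n:ℝ) := h2
      linarith [h1, hLhigh, hn4]
    obtain ⟨hζ1, hζe, hIneq⟩ := hN₀ L hLN₀
    set ζ := logIter ℓ (L:ℝ) with hζ_def
    have hζΞ : ζ ≤ Ξ := logIter_mono ℓ hLT hLn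
    have hζ0 : (0:ℝ) < ζ := by linarith
    have hDL : 0 < Dob ℓ L := (dob_master ℓ).1 L
    have hDn : 0 < Dob (ℓ+1) n := (dob_master (ℓ+1)).1 n
    -- log form of inner bound
    have hlogDobL : -(c*L) - L * Real.log Ξ ≤ Real.log (Dob ℓ L) := by
      have h1 : Real.log (Real.exp L) ≤ Real.log (Real.exp (c*L) * ζ^L * Dob ℓ L) :=
        Real.log_le_log (Real.exp_pos _) hIneq
      rw [Real.log_exp, Real.log_mul (by positivity) hDL.ne',
        Real.log_mul (Real.exp_ne_zero _) (by positivity), Real.log_exp, Real.log_pow] at h1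
      have h2 : Real.log ζ ≤ Real.log Ξ := Real.log_le_log hζ0 hζΞ
      have h3 : (L:ℝ) * Real.log ζ ≤ (L:ℝ) * Real.log Ξ :=
        mul_le_mul_of_nonneg_left h2 hL0.le
      push_cast at h1 ⊢
      linarith [h1, h3, hL0.le]
    -- single-term lower bound for Dob (ℓ+1) n, in log form
    have hsingle : Dob ℓ L * (L:ℝ)^n / n ! ≤ Dob (ℓ+1) n := dob_single_le ℓ n L
    have hlogDn : Real.log (Dob ℓ L) + n * Real.log L - Real.log (n ! : ℝ)
        ≤ Real.log (Dob (ℓ+1) n) := by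
      have hpos : (0:ℝ) < Dob ℓ L * (L:ℝ)^n / n ! := by positivity
      have h1 := Real.log_le_log hpos hsingle
      rw [Real.log_div (by positivity) (by positivity),
        Real.log_mul hDL.ne' (by positivity), Real.log_pow] at h1
      push_cast at h1 ⊢
      linarith
    have hlogL : Real.log n - Real.log w ≤ Real.log L := by
      have h1 : Real.log ((n:ℝ)/w) ≤ Real.log L := Real.log_le_log (by positivity) hLlow
      rwa [Real.log_div hn0.ne' hw0.ne'] at h1
    have hlogw : Real.log w ≤ Real.log 2 + Real.log ξ' := by
      have h1 : Real.log w ≤ Real.log (2*ξ') := Real.log_le_log hw0 hwξ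
      rwa [Real.log_mul two_ne_zero (by linarith : ξ' ≠ 0)] at h1
    have hlognfact : Real.log (n ! : ℝ) ≤ n * Real.log n := by
      have hfact : (n ! : ℝ) ≤ (n:ℝ) ^ n := by exact_mod_cast Nat.factorial_le_pow n
      have h1 := Real.log_le_log (by positivity) hfact
      rwa [Real.log_pow] at h1
      -- push_cast?
    have hLw2n : (L:ℝ) * w ≤ 2*n := by
      have h := mul_le_mul_of_nonneg_right hLhigh hw0.le
      have h2 : ((n:ℝ)/w + 1)*w = n + w := by field_simp
      rw [h2] at h
      linarith
    -- final computation, in log form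
    have hP : (0:ℝ) < Real.exp ((c+4) * n) * ξ' ^ n * Dob (ℓ+1) n := by positivity
    rw [← Real.log_le_log_iff (Real.exp_pos _) hP, Real.log_exp,
      Real.log_mul (by positivity) hDn.ne', Real.log_mul (Real.exp_ne_zero _) (by positivity),
      Real.log_exp, Real.log_pow]
    have hlog2 : Real.log 2 ≤ 1 := by
      have := Real.log_le_sub_one_of_pos (by norm_num : (0:ℝ) < 2)
      linarith
    have hb1 : (n:ℝ) * (Real.log n - Real.log w) ≤ n * Real.log L :=
      mul_le_mul_of_nonneg_left hlogL hn0.le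
    have hb2 : (n:ℝ) * Real.log w ≤ n * (Real.log 2 + Real.log ξ') :=
      mul_le_mul_of_nonneg_left hlogw hn0.le
    have hb3 : (L:ℝ) * (c + Real.log Ξ) ≤ (L:ℝ) * w := by
      have : c + Real.log Ξ ≤ w := by rw [hw_def, ← hξ'log]; linarith
      exact mul_le_mul_of_nonneg_left this hL0.le
    have hξ'0 : (0:ℝ) < ξ' := by linarith
    have hlogξ'_nonneg : 0 ≤ Real.log ξ' := Real.log_nonneg hξ'1
    have hlogDobL' : -(c*(L:ℝ)) - (L:ℝ) * ξ' ≤ Real.log (Dob ℓ L) := by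
      rw [hξ'log]; exact hlogDobL
    have hb3' : (L:ℝ) * (c + ξ') ≤ (L:ℝ) * w := by
      rw [hξ'log]
      have hrw : (L:ℝ) * (c + Real.log Ξ) ≤ (L:ℝ) * w := hb3
      exact hrw
    have hkey : -(2*(n:ℝ)) - (n:ℝ)*Real.log 2 - (n:ℝ)*Real.log ξ'
        ≤ Real.log (Dob (ℓ+1) n) := by
      linarith [hlogDn, hlogDobL', hb1, hb2, hb3', hLw2n, hlognfact, hL0.le]
    have hprod : 0 ≤ (c + 1 - Real.log 2) * (n:ℝ) :=
      mul_nonneg (by linarith) hn0.le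
    push_cast
    linarith [hkey, hprod]


/-- For every integer `k ≥ 2`, the Bell numbers of order `k` satisfy growth condition (1.2):
`limsup_{n→∞} ((n! / bellOrd k n) * inf_{x>0} G x / x^n)^(1/n) < ∞`, where
`G x = expIter k x / expIter k 0`. -/
theorem bellOrd_growth_condition (k : ℕ) (hk : 2 ≤ k) :
    Filter.limsup
      (fun n : ℕ =>
        (((((n ! : ℝ) / bellOrd k n) *
          ⨅ x : Set.Ioi (0 : ℝ), (expIter k x / expIter k 0) / (x : ℝ) ^ n) ^
            ((n : ℝ)⁻¹) : ℝ) : EReal))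
      Filter.atTop < ⊤ := by
  obtain ⟨m, rfl⟩ : ∃ m, k = m + 1 := ⟨k - 1, by omega⟩
  obtain ⟨c, hc1, hev⟩ := main_bound m
  have hE : 0 < expIter (m+1) 0 := Real.exp_pos _
  have hev' : ∀ᶠ n : ℕ in Filter.atTop,
      (((((n ! : ℝ) / bellOrd (m+1) n) *
        ⨅ x : Set.Ioi (0 : ℝ), (expIter (m+1) x / expIter (m+1) 0) / (x : ℝ) ^ n) ^
          ((n : ℝ)⁻¹) : ℝ) : EReal) ≤ ((Real.exp c : ℝ) : EReal) := by
    filter_upwards [hev, Filter.eventually_ge_atTop 1] with n hn hn1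
    obtain ⟨hξ1, hξe, hineq⟩ := hn
    set ξ := logIter m (n:ℝ) with hξ_def
    have hξ0 : (0:ℝ) < ξ := by linarith
    have hD : 0 < Dob m n := (dob_master m).1 n
    have hBell : BellB (m+1) n = (n ! : ℝ) * Dob m n := iteratedDeriv_expIter m n
    have hfactpos : (0:ℝ) < (n ! : ℝ) := by positivity
    have hbell : bellOrd (m+1) n = (n ! : ℝ) * Dob m n / expIter (m+1) 0 := by
      rw [bellOrd, hBell]
    have hbellpos : 0 < bellOrd (m+1) n := by rw [hbell]; positivity
    set I := ⨅ x : Set.Ioi (0 : ℝ), (expIter (m+1) x / expIter (m+1) 0) / (x : ℝ) ^ n with hI_def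
    have hInonneg : 0 ≤ I := by
      refine Real.iInf_nonneg fun x => ?_
      have hx : (0:ℝ) < (x:ℝ) := x.2
      have := Real.exp_pos (expIter m (x:ℝ))
      positivity
    have hIle : I ≤ (expIter (m+1) ξ / expIter (m+1) 0) / ξ ^ n := by
      refine ciInf_le ⟨0, ?_⟩ (⟨ξ, hξ0⟩ : Set.Ioi (0:ℝ))
      rintro y ⟨x, rfl⟩
      have hx : (0:ℝ) < (x:ℝ) := x.2
      have := Real.exp_pos (expIter m (x:ℝ))
      positivity
    have hexpξ : expIter (m+1) ξ = Real.exp n := by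
      rw [expIter_succ, hξe]
    set a := ((n ! : ℝ) / bellOrd (m+1) n) * I with ha_def
    have ha0 : 0 ≤ a := mul_nonneg (by positivity) hInonneg
    have haQ : a ≤ Real.exp n / (Dob m n * ξ ^ n) := by
      have h1 : a ≤ ((n ! : ℝ) / bellOrd (m+1) n) *
          ((expIter (m+1) ξ / expIter (m+1) 0) / ξ ^ n) :=
        mul_le_mul_of_nonneg_left hIle (by positivity)
      have h2 : ((n ! : ℝ) / bellOrd (m+1) n) *
          ((expIter (m+1) ξ / expIter (m+1) 0) / ξ ^ n)
          = Real.exp n / (Dob m n * ξ ^ n) := by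
        rw [hexpξ, hbell]
        field_simp
      linarith [h1, h2.le, h2.ge]
    have hfin : a ≤ Real.exp (c * n) := by
      refine haQ.trans ?_
      rw [div_le_iff₀ (by positivity)]
      calc Real.exp n ≤ Real.exp (c*n) * ξ^n * Dob m n := hineq
      _ = Real.exp (c*n) * (Dob m n * ξ^n) := by ring
    have hrpow : a ^ ((n:ℝ)⁻¹) ≤ Real.exp c := by
      have h1 : a ^ ((n:ℝ)⁻¹) ≤ (Real.exp (c * n)) ^ ((n:ℝ)⁻¹) :=
        Real.rpow_le_rpow ha0 hfin (by positivity)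
      have hn0 : ((n:ℝ)) ≠ 0 := by positivity
      have h2 : (Real.exp (c * n)) ^ ((n:ℝ)⁻¹) = Real.exp c := by
        rw [← Real.exp_mul]
        congr 1
        field_simp
      rwa [h2] at h1
    exact_mod_cast EReal.coe_le_coe_iff.2 hrpow
  have hlimsup := Filter.limsup_le_of_le (by isBoundedDefault) hev'
  exact lt_of_le_of_lt hlimsup (EReal.coe_lt_top _)
end
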